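/- arXiv:math/0406594 — 5 statements merged into one kernel-verified Lean document; each statement's English description precedes it below -/
import Mathlib

section
/- Let X ⊆ ℝ^n be a nonempty (possibly unbounded) open set, let F : X × ℝ^M → ℝ be jointly continuous, and let f : X → ℝ be continuous with f(x) ∈ int R_x for every x ∈ X. Then for every x₀ ∈ X and every ε > 0 there exist δ > 0 and a polynomial function P : ℝ^n → ℝ such that for all x ∈ X with ‖x − x₀‖ ≤ δ one has f(x) − ε ≤ T(x,D)P(x) ≤ f(x). -/
open Set Topology Filter
open MvPolynomial

/-- The partial derivative of `f` in the `i`-th coordinate direction. -/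
noncomputable def pder {n : ℕ} (i : Fin n) (f : (Fin n → ℝ) → ℝ) : (Fin n → ℝ) → ℝ :=
  fun x => fderiv ℝ f x (Pi.single i 1)

/-- The multi-index partial derivative `D^p f` for a multi-index `p : Fin n → ℕ`. -/
noncomputable def mderiv {n : ℕ} (p : Fin n → ℕ) (f : (Fin n → ℝ) → ℝ) : (Fin n → ℝ) → ℝ :=
  (List.finRange n).foldr (fun i g => (pder i)^[p i] g) f

/-- The nonlinear partial differential operator `T(x,D)` associated to `F`, where
`e : Fin M → (Fin n → ℕ)` enumerates the multi-indices `p` with `|p| ≤ m`: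
`T(x,D)U(x) = F(x, (D^p U(x))_{|p| ≤ m})`. -/
noncomputable def TOp {n M : ℕ} (e : Fin M → (Fin n → ℕ))
    (F : (Fin n → ℝ) → (Fin M → ℝ) → ℝ) (U : (Fin n → ℝ) → ℝ) : (Fin n → ℝ) → ℝ :=
  fun x => F x (fun i => mderiv (e i) U x)


lemma hasFDerivAt_mvpoly_eval {n : ℕ} (P : MvPolynomial (Fin n) ℝ) (x : Fin n → ℝ) :
    HasFDerivAt (fun y : Fin n → ℝ => eval y P)
      (∑ j : Fin n, eval x (pderiv j P) • (ContinuousLinearMap.proj j : (Fin n → ℝ) →L[ℝ] ℝ)) x := by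
  induction P using MvPolynomial.induction_on with
  | C a =>
      simp only [eval_C, map_zero, pderiv_C, zero_smul, Finset.sum_const_zero]
      exact hasFDerivAt_const a x
  | add p q hp hq =>
      have := hp.add hq
      simp only [map_add] at this ⊢
      refine this.congr_fderiv ?_
      simp [add_smul, Finset.sum_add_distrib]
  | mul_X p i hp =>
      have h2 : HasFDerivAt (fun y : Fin n → ℝ => y i)
          ((ContinuousLinearMap.proj i : (Fin n → ℝ) →L[ℝ] ℝ)) x := hasFDerivAt_apply i x
      have this2 := hp.mul h2
      have key : ∀ j : Fin n, eval x (pderiv j (p * X i)) =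
          eval x (pderiv j p) * x i + (if j = i then eval x p else 0) := by
        intro j
        rw [Derivation.leibniz]
        by_cases h : j = i
        · subst h; simp [pderiv_X_self, smul_eq_mul]; ring
        · simp [pderiv_X_of_ne (Ne.symm h), smul_eq_mul, h]; ring
      have heq : ((eval x) p • (ContinuousLinearMap.proj i : (Fin n → ℝ) →L[ℝ] ℝ)
            + x i • ∑ j : Fin n, (eval x) ((pderiv j) p) •
              (ContinuousLinearMap.proj j : (Fin n → ℝ) →L[ℝ] ℝ))
          = ∑ j : Fin n, eval x (pderiv j (p * X i)) •
              (ContinuousLinearMap.proj j : (Fin n → ℝ) →L[ℝ] ℝ) := by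
        ext v
        simp only [ContinuousLinearMap.sum_apply, ContinuousLinearMap.smul_apply,
          ContinuousLinearMap.proj_apply, ContinuousLinearMap.add_apply, key, smul_eq_mul,
          ContinuousLinearMap.coe_smul', Pi.smul_apply, add_mul, ite_mul, zero_mul,
          Finset.sum_add_distrib, Finset.sum_ite_eq', Finset.mem_univ, if_true]
        rw [Finset.mul_sum, add_comm]
        congr 1
        exact Finset.sum_congr rfl fun j _ => by ring
      have hfun : (fun y : Fin n → ℝ => eval y (p * X i)) = fun y => eval y p * y i := by
        funext y; simp
      rw [hfun, ← heq]
      exact this2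

lemma pder_eval {n : ℕ} (i : Fin n) (P : MvPolynomial (Fin n) ℝ) :
    pder i (fun y => eval y P) = fun y => eval y (pderiv i P) := by
  funext x
  rw [pder, (hasFDerivAt_mvpoly_eval P x).fderiv]
  simp [Pi.single_apply]

lemma iter_pder_eval {n : ℕ} (i : Fin n) (k : ℕ) (P : MvPolynomial (Fin n) ℝ) :
    (pder i)^[k] (fun y => eval y P) = fun y => eval y ((pderiv i)^[k] P) := by
  induction k generalizing P with
  | zero => rfl
  | succ k ih =>
      rw [Function.iterate_succ_apply, Function.iterate_succ_apply, pder_eval, ih]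

lemma foldr_pder_eval {n : ℕ} (l : List (Fin n)) (p : Fin n → ℕ) (P : MvPolynomial (Fin n) ℝ) :
    l.foldr (fun i g => (pder i)^[p i] g) (fun y => eval y P)
      = fun y => eval y (l.foldr (fun i Q => (pderiv i)^[p i] Q) P) := by
  induction l generalizing P with
  | nil => rfl
  | cons i l ih => rw [List.foldr_cons, List.foldr_cons, ih, iter_pder_eval]

lemma pderiv_iterate_pow {n : ℕ} (j : Fin n) (c : ℝ) (b a : ℕ) :
    (pderiv j)^[a] ((X j - C c) ^ b : MvPolynomial (Fin n) ℝ)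
      = C (b.descFactorial a : ℝ) * (X j - C c) ^ (b - a) := by
  induction a with
  | zero => simp
  | succ a ih =>
      rw [Function.iterate_succ_apply', ih, pderiv_C_mul, pderiv_pow]
      have hd : pderiv j ((X j - C c) : MvPolynomial (Fin n) ℝ) = 1 := by
        simp [pderiv_X_self]
      rw [hd, mul_one]
      by_cases h : a < b
      · have h1 : b - a = (b - (a+1)) + 1 := by omega
        rw [Nat.descFactorial_succ, h1]
        push_cast
        rw [map_mul]
        ring_nf
        rw [← MvPolynomial.C_eq_coe_nat]
        rw [map_add]
        simp [map_one]
        ring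
      · have h1 : b - a = 0 := by omega
        have h2 : b.descFactorial (a + 1) = 0 := by
          rw [Nat.descFactorial_eq_zero_iff_lt]; omega
        rw [h1, h2]
        simp

lemma pderiv_of_ne {n : ℕ} {i j : Fin n} (h : i ≠ j) (c : ℝ) (d : ℝ) (b : ℕ) :
    pderiv i (C d * (X j - C c) ^ b : MvPolynomial (Fin n) ℝ) = 0 := by
  rw [pderiv_C_mul, pderiv_pow]
  simp [pderiv_X_of_ne h.symm]

lemma pderiv_factor_zero {n : ℕ} {i j : Fin n} (h : j ≠ i) (c : ℝ) (b : ℕ) :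
    pderiv i ((X j - C c) ^ b : MvPolynomial (Fin n) ℝ) = 0 := by
  rw [pderiv_pow]
  simp [pderiv_X_of_ne h]

lemma iterate_pderiv_mul_right {n : ℕ} {i : Fin n} {B : MvPolynomial (Fin n) ℝ}
    (hB : pderiv i B = 0) (k : ℕ) (A : MvPolynomial (Fin n) ℝ) :
    (pderiv i)^[k] (A * B) = (pderiv i)^[k] A * B := by
  induction k generalizing A with
  | zero => rfl
  | succ k ih =>
      rw [Function.iterate_succ_apply, Function.iterate_succ_apply, pderiv_mul, hB,
        mul_zero, add_zero, ih]

lemma foldr_pderiv_prod {n : ℕ} (c : Fin n → ℝ) (q p : Fin n → ℕ) (l : List (Fin n))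
    (hl : l.Nodup) :
    l.foldr (fun i Q => (pderiv i)^[p i] Q)
        (∏ j : Fin n, ((X j - C (c j)) ^ (q j) : MvPolynomial (Fin n) ℝ))
      = ∏ j : Fin n, (if j ∈ l then
          C (((q j).descFactorial (p j) : ℕ) : ℝ) * (X j - C (c j)) ^ (q j - p j)
        else (X j - C (c j)) ^ (q j)) := by
  induction l with
  | nil => simp
  | cons i l ih =>
      have hi : i ∉ l := (List.nodup_cons.mp hl).1
      have hl' : l.Nodup := (List.nodup_cons.mp hl).2
      rw [List.foldr_cons, ih hl']
      set h : Fin n → MvPolynomial (Fin n) ℝ := fun j => if j ∈ l then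
          C (((q j).descFactorial (p j) : ℕ) : ℝ) * (X j - C (c j)) ^ (q j - p j)
        else (X j - C (c j)) ^ (q j) with hh
      have hprod : ∏ j : Fin n, h j = h i * ∏ j ∈ Finset.univ.erase i, h j :=
        (Finset.mul_prod_erase Finset.univ h (Finset.mem_univ i)).symm
      have hB : pderiv i (∏ j ∈ Finset.univ.erase i, h j) = 0 := by
        refine Finset.prod_induction h (fun A => pderiv i A = 0) ?_ (by simp) ?_
        · intro a b ha hb
          rw [pderiv_mul, ha, hb]; simp
        · intro j hj
          have hji : j ≠ i := Finset.ne_of_mem_erase hj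
          rw [hh]
          by_cases hjl : j ∈ l
          · simp only [hjl, if_true]
            rw [pderiv_C_mul, pderiv_factor_zero hji, mul_zero]
          · simp only [hjl, if_false]
            exact pderiv_factor_zero hji _ _
      have hhi : h i = (X i - C (c i)) ^ (q i) := by simp [hh, hi]
      rw [hprod, iterate_pderiv_mul_right hB, hhi, pderiv_iterate_pow]
      rw [← Finset.mul_prod_erase Finset.univ _ (Finset.mem_univ i)]
      · congr 1
        · simp
        · refine Finset.prod_congr rfl fun j hj => ?_
          have hji : j ≠ i := Finset.ne_of_mem_erase hj
          simp only [hh, List.mem_cons, hji, false_or]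

lemma eval_foldr_monomial {n : ℕ} (c : Fin n → ℝ) (q p : Fin n → ℕ) :
    eval c ((List.finRange n).foldr (fun i Q => (pderiv i)^[p i] Q)
        (∏ j : Fin n, ((X j - C (c j)) ^ (q j) : MvPolynomial (Fin n) ℝ)))
      = if p = q then ∏ j : Fin n, ((q j).factorial : ℝ) else 0 := by
  rw [foldr_pderiv_prod c q p _ (List.nodup_finRange n)]
  simp only [List.mem_finRange, if_true]
  rw [show ((eval c) (∏ j : Fin n,
      (C (((q j).descFactorial (p j) : ℕ) : ℝ) * (X j - C (c j)) ^ (q j - p j) : MvPolynomial (Fin n) ℝ)))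
    = ∏ j : Fin n, (eval c) (C (((q j).descFactorial (p j) : ℕ) : ℝ) * (X j - C (c j)) ^ (q j - p j))
    from map_prod (eval c) _ Finset.univ]
  by_cases h : p = q
  · subst h
    rw [if_pos rfl]
    refine Finset.prod_congr rfl fun j _ => ?_
    simp [Nat.descFactorial_self]
  · obtain ⟨j, hj⟩ : ∃ j, p j ≠ q j := by
      by_contra hc; push_neg at hc; exact h (funext hc)
    rw [if_neg h]
    refine Finset.prod_eq_zero (Finset.mem_univ j) ?_
    rcases lt_or_gt_of_ne hj with hlt | hgt
    · have : q j - p j ≠ 0 := by omega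
      simp [this, zero_pow this]
    · have : (q j).descFactorial (p j) = 0 :=
        Nat.descFactorial_eq_zero_iff_lt.mpr hgt
      simp [this]

lemma iterate_pderiv_add {n : ℕ} (i : Fin n) (k : ℕ) (A B : MvPolynomial (Fin n) ℝ) :
    (pderiv i)^[k] (A + B) = (pderiv i)^[k] A + (pderiv i)^[k] B := by
  induction k generalizing A B with
  | zero => rfl
  | succ k ih => rw [Function.iterate_succ_apply, map_add, ih, ← Function.iterate_succ_apply, ← Function.iterate_succ_apply]

lemma iterate_pderiv_C_mul {n : ℕ} (i : Fin n) (k : ℕ) (a : ℝ) (A : MvPolynomial (Fin n) ℝ) :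
    (pderiv i)^[k] (C a * A) = C a * (pderiv i)^[k] A := by
  induction k generalizing A with
  | zero => rfl
  | succ k ih => rw [Function.iterate_succ_apply, pderiv_C_mul, ih, ← Function.iterate_succ_apply]

lemma foldr_pderiv_sum {n M : ℕ} (p : Fin n → ℕ) (g : Fin M → MvPolynomial (Fin n) ℝ)
    (l : List (Fin n)) :
    l.foldr (fun i Q => (pderiv i)^[p i] Q) (∑ k : Fin M, g k)
      = ∑ k : Fin M, l.foldr (fun i Q => (pderiv i)^[p i] Q) (g k) := by
  induction l with
  | nil => rfl
  | cons i l ih =>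
      rw [List.foldr_cons, ih]
      induction (Finset.univ : Finset (Fin M)) using Finset.induction with
      | empty =>
          simp only [Finset.sum_empty]
          induction (p i) with
          | zero => rfl
          | succ k ihk => rw [Function.iterate_succ_apply, map_zero]; exact ihk
      | @insert a s hx ih2 =>
          rw [Finset.sum_insert hx, Finset.sum_insert hx, iterate_pderiv_add, ih2]
          simp [List.foldr_cons]

lemma foldr_pderiv_C_mul {n : ℕ} (p : Fin n → ℕ) (a : ℝ) (A : MvPolynomial (Fin n) ℝ)
    (l : List (Fin n)) :
    l.foldr (fun i Q => (pderiv i)^[p i] Q) (C a * A)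
      = C a * l.foldr (fun i Q => (pderiv i)^[p i] Q) A := by
  induction l generalizing A with
  | nil => rfl
  | cons i l ih =>
      rw [List.foldr_cons, ih, iterate_pderiv_C_mul]
      simp [List.foldr_cons]

/-- **Lemma 1.** Let `X ⊆ ℝⁿ` be a nonempty open set, `F` jointly continuous and
`f` continuous with `f(x) ∈ int R_x` for all `x ∈ X`, where `R_x = F({x} × ℝᴹ)`.
Then for every `x₀ ∈ X` and `ε > 0` there are `δ > 0` and a polynomial `P` such that
`f(x) − ε ≤ T(x,D)P(x) ≤ f(x)` whenever `x ∈ X` and `‖x − x₀‖ ≤ δ`. -/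
theorem polynomial_lower_approximation
    {n m M : ℕ} (X : Set (Fin n → ℝ)) (hXopen : IsOpen X) (hXne : X.Nonempty)
    (e : Fin M → (Fin n → ℕ)) (he : Function.Injective e)
    (hrange : ∀ p : Fin n → ℕ, (∑ i, p i) ≤ m ↔ p ∈ Set.range e)
    (F : (Fin n → ℝ) → (Fin M → ℝ) → ℝ)
    (hF : ContinuousOn (fun q : (Fin n → ℝ) × (Fin M → ℝ) => F q.1 q.2) (X ×ˢ Set.univ))
    (f : (Fin n → ℝ) → ℝ) (hf : ContinuousOn f X)
    (hrc : ∀ x ∈ X, f x ∈ interior (Set.range (F x))) :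
    ∀ x₀ ∈ X, ∀ ε > (0 : ℝ), ∃ δ > (0 : ℝ), ∃ P : MvPolynomial (Fin n) ℝ,
      ∀ x ∈ X, ‖x - x₀‖ ≤ δ →
        f x - ε ≤ TOp e F (fun y => MvPolynomial.eval y P) x ∧
        TOp e F (fun y => MvPolynomial.eval y P) x ≤ f x := by
  intro x₀ hx₀ ε hε
  obtain ⟨η, hη, hball⟩ : ∃ η > 0, Metric.ball (f x₀) η ⊆ Set.range (F x₀) := by
    have := hrc x₀ hx₀
    rcases Metric.mem_nhds_iff.mp (mem_interior_iff_mem_nhds.mp this) with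
      ⟨η, hη, hb⟩
    exact ⟨η, hη, hb⟩
  set γ : ℝ := min ε η with hγdef
  have hγ : 0 < γ := lt_min hε hη
  set c : ℝ := f x₀ - γ / 2 with hcdef
  have hc_mem : c ∈ Metric.ball (f x₀) η := by
    rw [Metric.mem_ball, dist_eq_norm]
    have : ‖c - f x₀‖ = γ / 2 := by
      rw [hcdef]; rw [show f x₀ - γ / 2 - f x₀ = -(γ/2) by ring, norm_neg,
        Real.norm_of_nonneg (by linarith)]
    rw [this]
    have : γ ≤ η := min_le_right _ _
    linarith
  obtain ⟨ξ, hξ⟩ : ∃ ξ : Fin M → ℝ, F x₀ ξ = c := hball hc_mem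
  -- the polynomial
  set P : MvPolynomial (Fin n) ℝ := ∑ k : Fin M,
    C (ξ k / ∏ j : Fin n, ((e k j).factorial : ℝ)) *
      ∏ j : Fin n, (MvPolynomial.X j - C (x₀ j)) ^ (e k j) with hPdef
  set Q : Fin M → MvPolynomial (Fin n) ℝ := fun i =>
    (List.finRange n).foldr (fun t R => (pderiv t)^[e i t] R) P with hQdef
  have hmd : ∀ i : Fin M, mderiv (e i) (fun y => MvPolynomial.eval y P)
      = fun y => MvPolynomial.eval y (Q i) := by
    intro i
    rw [mderiv, foldr_pder_eval]
  have hQval : ∀ i : Fin M, MvPolynomial.eval x₀ (Q i) = ξ i := by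
    intro i
    have hQi : Q i = (List.finRange n).foldr (fun t R => (pderiv t)^[e i t] R)
        (∑ k : Fin M, C (ξ k / ∏ j : Fin n, ((e k j).factorial : ℝ)) *
          ∏ j : Fin n, (MvPolynomial.X j - C (x₀ j)) ^ (e k j)) := rfl
    rw [hQi, foldr_pderiv_sum, map_sum]
    have hterm : ∀ k : Fin M, MvPolynomial.eval x₀
        ((List.finRange n).foldr (fun t R => (pderiv t)^[e i t] R)
          (C (ξ k / ∏ j : Fin n, ((e k j).factorial : ℝ)) *
            ∏ j : Fin n, (MvPolynomial.X j - C (x₀ j)) ^ (e k j)))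
        = if e i = e k then ξ k else 0 := by
      intro k
      rw [foldr_pderiv_C_mul, map_mul, eval_C, eval_foldr_monomial]
      by_cases h : e i = e k
      · rw [if_pos h, if_pos h]
        have hfac : (∏ j : Fin n, ((e k j).factorial : ℝ)) ≠ 0 := by
          refine Finset.prod_ne_zero_iff.mpr fun j _ => ?_
          exact_mod_cast (Nat.factorial_pos _).ne'
        field_simp
      · rw [if_neg h, if_neg h, mul_zero]
    rw [Finset.sum_congr rfl fun k _ => hterm k]
    simp [he.eq_iff]
  -- identify TOp with a continuous function
  have hTOp : ∀ x, TOp e F (fun y => MvPolynomial.eval y P) x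
      = F x (fun i => MvPolynomial.eval x (Q i)) := by
    intro x
    rw [TOp]
    congr 1
    funext i
    rw [hmd i]
  have hT0 : F x₀ (fun i => MvPolynomial.eval x₀ (Q i)) = c := by
    rw [show (fun i => MvPolynomial.eval x₀ (Q i)) = ξ from funext hQval, hξ]
  -- continuity
  have hgc : ContinuousWithinAt (fun x => F x (fun i => MvPolynomial.eval x (Q i))) X x₀ := by
    have h1 : ContinuousOn
        (fun x : Fin n → ℝ => ((x, fun i => MvPolynomial.eval x (Q i)) :
          (Fin n → ℝ) × (Fin M → ℝ))) X := by
      refine ContinuousOn.prodMk continuousOn_id ?_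
      exact continuousOn_pi.mpr fun i =>
        (MvPolynomial.continuous_eval (p := Q i)).continuousOn
    exact (hF.comp h1 (fun x hx => ⟨hx, Set.mem_univ _⟩)) x₀ hx₀
  have hfc : ContinuousWithinAt f X x₀ := hf x₀ hx₀
  set gap : ℝ := γ / 4 with hgapdef
  have hgap : 0 < gap := by positivity
  obtain ⟨δ₁, hδ₁, h1⟩ := Metric.continuousWithinAt_iff.mp hgc gap hgap
  obtain ⟨δ₂, hδ₂, h2⟩ := Metric.continuousWithinAt_iff.mp hfc gap hgap
  refine ⟨min δ₁ δ₂ / 2, by positivity, P, fun x hx hxd => ?_⟩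
  have hd1 : dist x x₀ < δ₁ := by
    rw [dist_eq_norm]
    have : min δ₁ δ₂ / 2 < δ₁ := by
      have := min_le_left δ₁ δ₂; linarith
    linarith
  have hd2 : dist x x₀ < δ₂ := by
    rw [dist_eq_norm]
    have : min δ₁ δ₂ / 2 < δ₂ := by
      have := min_le_right δ₁ δ₂; linarith
    linarith
  have hg := h1 hx hd1
  have hfx := h2 hx hd2
  rw [hT0] at hg
  rw [Real.dist_eq] at hg hfx
  have hgx1 : F x (fun i => MvPolynomial.eval x (Q i)) < c + gap := by
    have := abs_lt.mp hg; linarith [this.2]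
  have hgx2 : c - gap < F x (fun i => MvPolynomial.eval x (Q i)) := by
    have := abs_lt.mp hg; linarith [this.1]
  have hfx1 : f x < f x₀ + gap := by
    have := abs_lt.mp hfx; linarith [this.2]
  have hfx2 : f x₀ - gap < f x := by
    have := abs_lt.mp hfx; linarith [this.1]
  have hγε : γ ≤ ε := min_le_left _ _
  rw [hTOp]
  clear_value γ c gap
  constructor
  · linarith
  · linarith
end

section
/- Let X ⊆ ℝ^n be a nonempty (possibly unbounded) open set, let F : X × ℝ^M → ℝ be jointly continuous, and let f : X → ℝ be continuous with f(x) ∈ int R_x for every x ∈ X. Then for every ε > 0 there exist a subset Γ_ε ⊂ X that is closed and nowhere dense in X, and a smooth function U_ε ∈ C^∞(X ∖ Γ_ε), such that f(x) − ε ≤ T(x,D)U_ε(x) ≤ f(x) for all x ∈ X ∖ Γ_ε. -/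
open Set Topology Filter

lemma pder_contDiff {n : ℕ} (i : Fin n) {f : (Fin n → ℝ) → ℝ}
    (hf : ContDiff ℝ (⊤:ℕ∞) f) : ContDiff ℝ (⊤:ℕ∞) (pder i f) := by
  have h1 : ContDiff ℝ (⊤:ℕ∞) (fderiv ℝ f) := hf.fderiv_right (by exact_mod_cast le_top)
  exact h1.clm_apply contDiff_const

lemma iter_pder_contDiff {n : ℕ} (i : Fin n) (k : ℕ) {f : (Fin n → ℝ) → ℝ}
    (hf : ContDiff ℝ (⊤:ℕ∞) f) : ContDiff ℝ (⊤:ℕ∞) ((pder i)^[k] f) := by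
  induction k generalizing f with
  | zero => exact hf
  | succ k ih => rw [Function.iterate_succ']; exact pder_contDiff i (ih hf)

lemma mderiv_contDiff {n : ℕ} (p : Fin n → ℕ) {f : (Fin n → ℝ) → ℝ}
    (hf : ContDiff ℝ (⊤:ℕ∞) f) : ContDiff ℝ (⊤:ℕ∞) (mderiv p f) := by
  unfold mderiv
  generalize List.finRange n = l
  induction l with
  | nil => exact hf
  | cons a t ih => exact iter_pder_contDiff a (p a) ih

lemma pder_eventuallyEq {n : ℕ} (i : Fin n) {f g : (Fin n → ℝ) → ℝ} {x : Fin n → ℝ}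
    (h : f =ᶠ[𝓝 x] g) : pder i f =ᶠ[𝓝 x] pder i g := by
  have h2 : fderiv ℝ f =ᶠ[nhds x] fderiv ℝ g := Filter.EventuallyEq.fderiv h
  filter_upwards [h2] with y hy
  simp only [pder, hy]

lemma iter_pder_eventuallyEq {n : ℕ} (i : Fin n) (k : ℕ) {f g : (Fin n → ℝ) → ℝ}
    {x : Fin n → ℝ} (h : f =ᶠ[𝓝 x] g) : (pder i)^[k] f =ᶠ[𝓝 x] (pder i)^[k] g := by
  induction k generalizing f g with
  | zero => exact h
  | succ k ih =>
      rw [Function.iterate_succ']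
      exact pder_eventuallyEq i (ih h)

lemma mderiv_eventuallyEq {n : ℕ} (p : Fin n → ℕ) {f g : (Fin n → ℝ) → ℝ} {x : Fin n → ℝ}
    (h : f =ᶠ[𝓝 x] g) : mderiv p f =ᶠ[𝓝 x] mderiv p g := by
  unfold mderiv
  generalize List.finRange n = l
  induction l with
  | nil => exact h
  | cons a t ih => exact iter_pder_eventuallyEq a (p a) ih

/-- scaled monomial -/
def amon {n : ℕ} (a : ℝ) (q : Fin n → ℕ) (c : Fin n → ℝ) : (Fin n → ℝ) → ℝ :=
  fun y => a * ∏ j, (y j - c j) ^ q j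

lemma amon_contDiff {n : ℕ} (a : ℝ) (q : Fin n → ℕ) (c : Fin n → ℝ) :
    ContDiff ℝ (⊤:ℕ∞) (amon a q c) := by
  unfold amon
  apply contDiff_const.mul
  exact contDiff_prod (fun j _ => ((contDiff_apply ℝ ℝ j).sub contDiff_const).pow _)

/-- path lemma -/
lemma pder_eq_deriv_update {n : ℕ} (i : Fin n) {f : (Fin n → ℝ) → ℝ} {y : Fin n → ℝ}
    (hf : DifferentiableAt ℝ f y) :
    pder i f y = deriv (fun t => f (Function.update y i t)) (y i) := by
  have hL : ∀ t : ℝ, Function.update y i t = (fun s : ℝ => y + (s - y i) • (Pi.single i 1 : Fin n → ℝ)) t := by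
    intro t
    funext j
    by_cases hj : j = i
    · subst hj; simp
    · simp [Function.update_of_ne hj, Pi.single_apply, hj]
  have hpath : HasDerivAt (fun t : ℝ => Function.update y i t) (Pi.single i 1) (y i) := by
    rw [show (fun t : ℝ => Function.update y i t) = fun s : ℝ => y + (s - y i) • (Pi.single i 1 : Fin n → ℝ) from funext hL]
    have : HasDerivAt (fun s : ℝ => s - y i) 1 (y i) := (hasDerivAt_id _).sub_const _
    simpa using ((this.smul_const (Pi.single i 1)).const_add y)
  have hcomp : HasDerivAt (fun t => f (Function.update y i t)) (fderiv ℝ f y (Pi.single i 1)) (y i) := by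
    have hfy : HasFDerivAt f (fderiv ℝ f y) (Function.update y i (y i)) := by
      rw [Function.update_eq_self]; exact hf.hasFDerivAt
    exact hfy.comp_hasDerivAt (y i) hpath
  rw [hcomp.deriv]; rfl

lemma pder_amon {n : ℕ} (i : Fin n) (a : ℝ) (q : Fin n → ℕ) (c : Fin n → ℝ) :
    pder i (amon a q c) = amon (a * q i) (Function.update q i (q i - 1)) c := by
  funext y
  rw [pder_eq_deriv_update i ((amon_contDiff a q c).differentiable (by simp)).differentiableAt]
  have hval : ∀ t : ℝ, amon a q c (Function.update y i t)
      = (a * ∏ j ∈ Finset.univ.erase i, (y j - c j) ^ q j) * (t - c i) ^ q i := by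
    intro t
    unfold amon
    rw [← Finset.mul_prod_erase Finset.univ _ (Finset.mem_univ i)]
    rw [Function.update_self]
    have : ∀ j ∈ Finset.univ.erase i, (Function.update y i t j - c j) ^ q j = (y j - c j) ^ q j := by
      intro j hj
      rw [Function.update_of_ne (Finset.ne_of_mem_erase hj)]
    rw [Finset.prod_congr rfl this]
    ring
  rw [show (fun t => amon a q c (Function.update y i t)) = fun t =>
      (a * ∏ j ∈ Finset.univ.erase i, (y j - c j) ^ q j) * (t - c i) ^ q i from funext hval]
  have hd : HasDerivAt (fun t : ℝ => (a * ∏ j ∈ Finset.univ.erase i, (y j - c j) ^ q j) * (t - c i) ^ q i)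
      ((a * ∏ j ∈ Finset.univ.erase i, (y j - c j) ^ q j) * ((q i : ℝ) * (y i - c i) ^ (q i - 1))) (y i) := by
    have h1 : HasDerivAt (fun t : ℝ => (t - c i) ^ q i) ((q i : ℝ) * (y i - c i) ^ (q i - 1)) (y i) := by
      simpa using (HasDerivAt.fun_pow ((hasDerivAt_id (y i)).sub_const (c i)) (q i))
    simpa using h1.const_mul _
  rw [hd.deriv]
  unfold amon
  rw [← Finset.mul_prod_erase Finset.univ (fun j => (y j - c j) ^ Function.update q i (q i - 1) j) (Finset.mem_univ i)]
  rw [Function.update_self]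
  have : ∀ j ∈ Finset.univ.erase i, (y j - c j) ^ Function.update q i (q i - 1) j = (y j - c j) ^ q j := by
    intro j hj
    rw [Function.update_of_ne (Finset.ne_of_mem_erase hj)]
  rw [Finset.prod_congr rfl this]
  ring

lemma iter_pder_amon {n : ℕ} (i : Fin n) (k : ℕ) (a : ℝ) (q : Fin n → ℕ) (c : Fin n → ℝ) :
    (pder i)^[k] (amon a q c)
      = amon (a * (Nat.descFactorial (q i) k : ℝ)) (Function.update q i (q i - k)) c := by
  induction k with
  | zero => simp
  | succ k ih =>
    rw [Function.iterate_succ', Function.comp_apply, ih, pder_amon, Function.update_idem,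
      Function.update_self]
    have h1 : a * ((q i).descFactorial k : ℝ) * ((q i - k : ℕ) : ℝ)
        = a * ((q i).descFactorial (k+1) : ℝ) := by
      rw [Nat.descFactorial_succ, Nat.cast_mul]; ring
    have h2 : q i - k - 1 = q i - (k+1) := by omega
    rw [h1, h2]

lemma foldr_amon {n : ℕ} (p : Fin n → ℕ) (c : Fin n → ℝ) (l : List (Fin n)) (hl : l.Nodup)
    (a : ℝ) (q : Fin n → ℕ) :
    List.foldr (fun i g => (pder i)^[p i] g) (amon a q c) l
      = amon (a * ∏ i ∈ l.toFinset, (Nat.descFactorial (q i) (p i) : ℝ))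
          (fun j => if j ∈ l then q j - p j else q j) c := by
  induction l with
  | nil => simp
  | cons b t ih =>
    have hb : b ∉ t := (List.nodup_cons.mp hl).1
    have ht : t.Nodup := (List.nodup_cons.mp hl).2
    rw [List.foldr_cons, ih ht, iter_pder_amon]
    have hqb : (if b ∈ t then q b - p b else q b) = q b := if_neg hb
    have hcoef : (a * ∏ i ∈ t.toFinset, ((q i).descFactorial (p i) : ℝ)) *
        ((if b ∈ t then q b - p b else q b).descFactorial (p b) : ℝ)
        = a * ∏ i ∈ (b :: t).toFinset, ((q i).descFactorial (p i) : ℝ) := by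
      rw [hqb, List.toFinset_cons, Finset.prod_insert (by simpa using hb)]
      ring
    have hfun : Function.update (fun j => if j ∈ t then q j - p j else q j) b
        ((if b ∈ t then q b - p b else q b) - p b)
        = fun j => if j ∈ b :: t then q j - p j else q j := by
      funext j
      by_cases hj : j = b
      · subst hj
        simp [hb]
      · rw [Function.update_of_ne hj]
        simp [List.mem_cons, hj]
    rw [hcoef, hfun]

lemma mderiv_amon_self {n : ℕ} (q : Fin n → ℕ) (a : ℝ) (c : Fin n → ℝ) :
    mderiv q (amon a q c) c = a * ∏ j, (Nat.factorial (q j) : ℝ) := by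
  unfold mderiv
  rw [foldr_amon q c _ (List.nodup_finRange n)]
  have h1 : (List.finRange n).toFinset = Finset.univ := by
    ext j; simp [List.mem_finRange]
  have h2 : (fun j => if j ∈ List.finRange n then q j - q j else q j) = fun _ => 0 := by
    funext j; simp [List.mem_finRange]
  rw [h1, h2]
  unfold amon
  simp [Nat.descFactorial_self]

lemma mderiv_amon_ne {n : ℕ} (p q : Fin n → ℕ) (hpq : p ≠ q) (a : ℝ) (c : Fin n → ℝ) :
    mderiv p (amon a q c) c = 0 := by
  unfold mderiv
  rw [foldr_amon p c _ (List.nodup_finRange n)]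
  obtain ⟨j0, hj0⟩ : ∃ j, q j ≠ p j := by
    by_contra h
    push_neg at h
    exact hpq (funext fun j => (h j).symm)
  rcases lt_or_gt_of_ne hj0 with hlt | hgt
  · -- q j0 < p j0 : descFactorial vanishes
    unfold amon
    have hz : ((Nat.descFactorial (q j0) (p j0) : ℕ) : ℝ) = 0 := by
      rw [Nat.descFactorial_eq_zero_iff_lt.mpr hlt]; simp
    have hz2 : (∏ i ∈ (List.finRange n).toFinset, ((q i).descFactorial (p i) : ℝ)) = 0 :=
      Finset.prod_eq_zero (List.mem_toFinset.mpr (List.mem_finRange j0)) hz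
    rw [hz2]
    ring
  · -- q j0 > p j0 : monomial vanishes at c
    unfold amon
    have hmem : j0 ∈ List.finRange n := List.mem_finRange j0
    have : (c j0 - c j0) ^ (if j0 ∈ List.finRange n then q j0 - p j0 else q j0) = 0 := by
      rw [if_pos hmem]
      simp [zero_pow, Nat.sub_ne_zero_of_lt hgt]
    rw [Finset.prod_eq_zero (Finset.mem_univ j0) this]
    ring

lemma pder_sum {n M : ℕ} (i : Fin n) (f : Fin M → (Fin n → ℝ) → ℝ)
    (hf : ∀ k, ContDiff ℝ (⊤:ℕ∞) (f k)) :
    pder i (fun y => ∑ k, f k y) = fun y => ∑ k, pder i (f k) y := by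
  funext y
  unfold pder
  rw [fderiv_fun_sum (fun k _ => ((hf k).differentiable (by simp)).differentiableAt)]
  simp

lemma pder_contDiff' {n : ℕ} (i : Fin n) {f : (Fin n → ℝ) → ℝ}
    (hf : ContDiff ℝ (⊤:ℕ∞) f) : ContDiff ℝ (⊤:ℕ∞) (pder i f) := by
  have h1 : ContDiff ℝ (⊤:ℕ∞) (fderiv ℝ f) := hf.fderiv_right (by exact_mod_cast le_top)
  exact h1.clm_apply contDiff_const

lemma iter_pder_contDiff' {n : ℕ} (i : Fin n) (K : ℕ) {f : (Fin n → ℝ) → ℝ}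
    (hf : ContDiff ℝ (⊤:ℕ∞) f) : ContDiff ℝ (⊤:ℕ∞) ((pder i)^[K] f) := by
  induction K generalizing f with
  | zero => exact hf
  | succ K ih =>
    rw [Function.iterate_succ', Function.comp_apply]
    exact pder_contDiff' i (ih hf)

lemma iter_pder_sum {n M : ℕ} (i : Fin n) (K : ℕ) (f : Fin M → (Fin n → ℝ) → ℝ)
    (hf : ∀ k, ContDiff ℝ (⊤:ℕ∞) (f k)) :
    (pder i)^[K] (fun y => ∑ k, f k y) = fun y => ∑ k, (pder i)^[K] (f k) y := by
  induction K generalizing f with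
  | zero => simp
  | succ K ih =>
    rw [Function.iterate_succ', Function.comp_apply, ih f hf]
    have hck : ∀ k, ContDiff ℝ (⊤:ℕ∞) ((pder i)^[K] (f k)) :=
      fun k => iter_pder_contDiff' i K (hf k)
    rw [pder_sum i _ hck]
    funext y
    simp [Function.iterate_succ', Function.comp_apply]
  
lemma foldr_contDiff {n : ℕ} (p : Fin n → ℕ) (l : List (Fin n)) {f : (Fin n → ℝ) → ℝ}
    (hf : ContDiff ℝ (⊤:ℕ∞) f) :
    ContDiff ℝ (⊤:ℕ∞) (List.foldr (fun i g => (pder i)^[p i] g) f l) := by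
  induction l with
  | nil => exact hf
  | cons b t ih => exact iter_pder_contDiff' b (p b) ih

lemma mderiv_sum {n M : ℕ} (p : Fin n → ℕ) (f : Fin M → (Fin n → ℝ) → ℝ)
    (hf : ∀ k, ContDiff ℝ (⊤:ℕ∞) (f k)) :
    mderiv p (fun y => ∑ k, f k y) = fun y => ∑ k, mderiv p (f k) y := by
  unfold mderiv
  generalize List.finRange n = l
  induction l generalizing f with
  | nil => simp
  | cons b t ih =>
    rw [List.foldr_cons, ih f hf]
    exact iter_pder_sum b (p b) _ (fun k => foldr_contDiff p t (hf k))

lemma exists_poly {n M : ℕ} (e : Fin M → (Fin n → ℕ)) (he : Function.Injective e)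
    (ξ : Fin M → ℝ) (c : Fin n → ℝ) :
    ∃ U : (Fin n → ℝ) → ℝ, ContDiff ℝ (⊤:ℕ∞) U ∧ ∀ k, mderiv (e k) U c = ξ k := by
  set a : Fin M → ℝ := fun k => ξ k / ∏ j, (Nat.factorial (e k j) : ℝ) with ha
  refine ⟨fun y => ∑ k, amon (a k) (e k) c y, ?_, ?_⟩
  · exact ContDiff.sum (fun k _ => amon_contDiff (a k) (e k) c)
  · intro k
    rw [mderiv_sum (e k) _ (fun k' => amon_contDiff (a k') (e k') c)]
    show (∑ k' : Fin M, mderiv (e k) (amon (a k') (e k') c) c) = ξ k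
    rw [Finset.sum_eq_single k]
    · rw [mderiv_amon_self]
      have hfac : (∏ j, (Nat.factorial (e k j) : ℝ)) ≠ 0 :=
        Finset.prod_ne_zero_iff.mpr fun j _ => Nat.cast_ne_zero.mpr (Nat.factorial_ne_zero _)
      simp only [ha]; exact div_mul_cancel₀ _ hfac
    · intro k' _ hk'
      exact mderiv_amon_ne (e k) (e k') (fun h => hk' (he h.symm)) _ c
    · intro h
      exact absurd (Finset.mem_univ k) h

/-- **Proposition 1.** Let `X ⊆ ℝⁿ` be a nonempty open set, `F` jointly continuous and
`f` continuous with `f(x) ∈ int R_x` for all `x ∈ X`. Then for every `ε > 0` there exist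
`Γ_ε ⊆ X`, closed and nowhere dense in (the subspace topology of) `X`, and
`U_ε ∈ C^∞(X \ Γ_ε)` such that `f − ε ≤ T(x,D)U_ε ≤ f` on `X \ Γ_ε`. -/
theorem approximate_solution_off_closed_nowhere_dense
    {n m M : ℕ} (X : Set (Fin n → ℝ)) (hXopen : IsOpen X) (hXne : X.Nonempty)
    (e : Fin M → (Fin n → ℕ)) (he : Function.Injective e)
    (hrange : ∀ p : Fin n → ℕ, (∑ i, p i) ≤ m ↔ p ∈ Set.range e)
    (F : (Fin n → ℝ) → (Fin M → ℝ) → ℝ)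
    (hF : ContinuousOn (fun q : (Fin n → ℝ) × (Fin M → ℝ) => F q.1 q.2) (X ×ˢ Set.univ))
    (f : (Fin n → ℝ) → ℝ) (hf : ContinuousOn f X)
    (hrc : ∀ x ∈ X, f x ∈ interior (Set.range (F x))) :
    ∀ ε > (0 : ℝ), ∃ Γ : Set (Fin n → ℝ), Γ ⊆ X ∧
      IsClosed (Subtype.val ⁻¹' Γ : Set X) ∧
      IsNowhereDense (Subtype.val ⁻¹' Γ : Set X) ∧
      ∃ U : (Fin n → ℝ) → ℝ, ContDiffOn ℝ (⊤ : ℕ∞) U (X \ Γ) ∧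
        ∀ x ∈ X \ Γ, f x - ε ≤ TOp e F U x ∧ TOp e F U x ≤ f x := by
  intro ε hε
  -- `Good` data: a ball together with a smooth solution on it
  set Good : (Fin n → ℝ) × ℝ × ((Fin n → ℝ) → ℝ) → Prop := fun d =>
    0 < d.2.1 ∧ Metric.ball d.1 d.2.1 ⊆ X ∧ ContDiff ℝ (⊤:ℕ∞) d.2.2 ∧
    ∀ z ∈ Metric.ball d.1 d.2.1, f z - ε ≤ TOp e F d.2.2 z ∧ TOp e F d.2.2 z ≤ f z with hGood
  -- Key local existence: every point of X is the center of a good ball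
  have key : ∀ x₀ ∈ X, ∃ r > (0:ℝ), ∃ U, Good (x₀, r, U) := by
    intro x₀ hx₀
    obtain ⟨δ, hδ, hball⟩ := Metric.isOpen_iff.mp isOpen_interior (f x₀) (hrc x₀ hx₀)
    set η : ℝ := min (δ/2) (ε/2) with hη
    have hη0 : 0 < η := lt_min (by linarith) (by linarith)
    have hηε : η < ε := lt_of_le_of_lt (min_le_right _ _) (by linarith)
    have hmem : f x₀ - η ∈ Metric.ball (f x₀) δ := by
      rw [Metric.mem_ball, Real.dist_eq]
      have : η ≤ δ/2 := min_le_left _ _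
      rw [abs_of_nonpos (by linarith)]
      linarith
    obtain ⟨ξ, hξ⟩ := (hball hmem).out |> fun h => interior_subset (hball hmem)
    obtain ⟨U, hU, hUd⟩ := exists_poly e he ξ x₀
    have hTx₀ : TOp e F U x₀ = f x₀ - η := by
      unfold TOp
      rw [show (fun i => mderiv (e i) U x₀) = ξ from funext hUd, hξ]
    -- continuity of z ↦ TOp e F U z - f z within X
    have hcont : ContinuousWithinAt (fun z => TOp e F U z - f z) X x₀ := by
      have h1 : Continuous (fun z : Fin n → ℝ => (z, fun i => mderiv (e i) U z)) := by
        apply continuous_id.prodMk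
        exact continuous_pi (fun i => (mderiv_contDiff (e i) hU).continuous)
      have h2 : ContinuousWithinAt (fun z => TOp e F U z) X x₀ := by
        apply (hF.comp h1.continuousOn ?_).continuousWithinAt (s := X) hx₀
        intro z hz
        exact ⟨hz, mem_univ _⟩
      exact h2.sub (hf.continuousWithinAt hx₀)
    have hIoo : (fun z => TOp e F U z - f z) x₀ ∈ Ioo (-ε) (0:ℝ) := by
      simp only [hTx₀]
      constructor <;> [linarith; linarith]
    have hnhd : (fun z => TOp e F U z - f z) ⁻¹' (Ioo (-ε) 0) ∈ 𝓝[X] x₀ :=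
      hcont (Ioo_mem_nhds hIoo.1 hIoo.2)
    obtain ⟨V, hVo, hxV, hVsub⟩ := mem_nhdsWithin.mp hnhd
    obtain ⟨r, hr0, hrsub⟩ := Metric.isOpen_iff.mp (hVo.inter hXopen) x₀ ⟨hxV, hx₀⟩
    refine ⟨r, hr0, U, hr0, fun z hz => (hrsub hz).2, hU, ?_⟩
    intro z hz
    have hzV : z ∈ V ∩ X := hrsub hz
    have := hVsub ⟨hzV.1, hzV.2⟩
    simp only [mem_preimage, mem_Ioo] at this
    constructor <;> linarith [this.1, this.2]
  -- Zorn's lemma: maximal pairwise-disjoint family of good balls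
  set S : Set (Set ((Fin n → ℝ) × ℝ × ((Fin n → ℝ) → ℝ))) := {A |
    (∀ d ∈ A, Good d) ∧
    A.Pairwise fun d d' => Disjoint (Metric.ball d.1 d.2.1) (Metric.ball d'.1 d'.2.1)} with hS
  obtain ⟨A, hA⟩ := zorn_subset S (by
    intro c hc hchain
    refine ⟨⋃₀ c, ⟨?_, ?_⟩, fun s hs => subset_sUnion_of_mem hs⟩
    · rintro d ⟨t, htc, hdt⟩
      exact (hc htc).1 d hdt
    · rintro d ⟨t, htc, hdt⟩ d' ⟨t', ht'c, hd't'⟩ hne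
      rcases hchain.total htc ht'c with h | h
      · exact (hc ht'c).2 (h hdt) hd't' hne
      · exact (hc htc).2 hdt (h hd't') hne)
  have hAS : A ∈ S := hA.prop
  set O : Set (Fin n → ℝ) := ⋃ d ∈ A, Metric.ball d.1 d.2.1 with hO
  have hOopen : IsOpen O := isOpen_biUnion fun d _ => Metric.isOpen_ball
  have hOX : O ⊆ X := by
    rintro z hz
    simp only [hO, mem_iUnion] at hz
    obtain ⟨d, hdA, hzd⟩ := hz
    exact (hAS.1 d hdA).2.1 hzd
  refine ⟨X \ O, diff_subset, ?_, ?_, ?_⟩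
  · -- closedness in X
    have hpre : (Subtype.val ⁻¹' (X \ O) : Set X) = (Subtype.val ⁻¹' O)ᶜ := by
      ext ⟨z, hz⟩
      simp [hz]
    rw [hpre]
    exact (hOopen.preimage continuous_subtype_val).isClosed_compl
  · -- nowhere dense
    have hpre : (Subtype.val ⁻¹' (X \ O) : Set X) = (Subtype.val ⁻¹' O)ᶜ := by
      ext ⟨z, hz⟩
      simp [hz]
    have hclosed : IsClosed (Subtype.val ⁻¹' (X \ O) : Set X) := by
      rw [hpre]; exact (hOopen.preimage continuous_subtype_val).isClosed_compl
    rw [IsNowhereDense, hclosed.closure_eq]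
    by_contra hne
    obtain ⟨z, hz⟩ := nonempty_iff_ne_empty.mpr hne
    -- get a nonempty open V ⊆ (X \ O)
    have hmap : IsOpenMap (Subtype.val : X → (Fin n → ℝ)) := hXopen.isOpenMap_subtype_val
    set V : Set (Fin n → ℝ) := Subtype.val '' interior (Subtype.val ⁻¹' (X \ O) : Set X) with hV
    have hVopen : IsOpen V := hmap _ isOpen_interior
    have hVsub : V ⊆ X \ O := by
      rintro w ⟨w', hw', rfl⟩
      exact Set.mem_preimage.mp (interior_subset hw')
    have hzV : (z : Fin n → ℝ) ∈ V := ⟨z, hz, rfl⟩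
    -- construct a good ball inside V, contradicting maximality
    obtain ⟨r, hr0, U, hGd⟩ := key z (hVsub hzV).1
    obtain ⟨rv, hrv0, hrvsub⟩ := Metric.isOpen_iff.mp hVopen z hzV
    set d₀ : (Fin n → ℝ) × ℝ × ((Fin n → ℝ) → ℝ) := ((z : Fin n → ℝ), min r rv, U) with hd₀
    have hrr0 : 0 < min r rv := lt_min hr0 hrv0
    have hballsub : Metric.ball (z : Fin n → ℝ) (min r rv) ⊆ Metric.ball (z : Fin n → ℝ) r :=
      Metric.ball_subset_ball (min_le_left _ _)
    have hballV : Metric.ball (z : Fin n → ℝ) (min r rv) ⊆ V :=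
      (Metric.ball_subset_ball (min_le_right _ _)).trans hrvsub
    have hGd₀ : Good d₀ :=
      ⟨hrr0, hballsub.trans hGd.2.1, hGd.2.2.1, fun w hw => hGd.2.2.2 w (hballsub hw)⟩
    have hdisj : ∀ d ∈ A, Disjoint (Metric.ball d₀.1 d₀.2.1) (Metric.ball d.1 d.2.1) := by
      intro d hdA
      apply Set.disjoint_left.mpr
      intro w hw hwd
      have hwV : w ∈ V := hballV hw
      have hwO : w ∈ O := by
        simp only [hO, mem_iUnion]
        exact ⟨d, hdA, hwd⟩
      exact (hVsub hwV).2 hwO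
    have hd₀A : d₀ ∉ A := by
      intro hmem
      have : (z : Fin n → ℝ) ∈ O := by
        simp only [hO, mem_iUnion]
        exact ⟨d₀, hmem, Metric.mem_ball_self hrr0⟩
      exact (hVsub hzV).2 this
    have hAS' : insert d₀ A ∈ S := by
      constructor
      · rintro d (rfl | hdA)
        · exact hGd₀
        · exact hAS.1 d hdA
      · intro d hd d' hd' hne
        rcases hd with rfl | hdA <;> rcases hd' with rfl | hd'A
        · exact absurd rfl hne
        · exact hdisj d' hd'A
        · exact (hdisj d hdA).symm
        · exact hAS.2 hdA hd'A hne
    have : insert d₀ A ⊆ A := hA.2 hAS' (subset_insert _ _)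
    exact hd₀A (this (mem_insert _ _))
  · -- the glued function
    classical
    set Uε : (Fin n → ℝ) → ℝ := fun w =>
      if h : ∃ d, d ∈ A ∧ w ∈ Metric.ball d.1 d.2.1 then h.choose.2.2 w else 0 with hUε
    have huniq : ∀ d ∈ A, ∀ d' ∈ A, ∀ w, w ∈ Metric.ball d.1 d.2.1 →
        w ∈ Metric.ball d'.1 d'.2.1 → d = d' := by
      intro d hdA d' hd'A w hw hw'
      by_contra hne
      exact Set.disjoint_left.mp (hAS.2 hdA hd'A hne) hw hw'
    have hXd : X \ (X \ O) = O := by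
      rw [diff_diff_right, Set.diff_self, Set.empty_union]
      exact inter_eq_self_of_subset_right hOX
    have hloc : ∀ x ∈ X \ (X \ O), ∃ d ∈ A, x ∈ Metric.ball d.1 d.2.1 ∧
        Uε =ᶠ[𝓝 x] d.2.2 := by
      intro x hx
      rw [hXd] at hx
      simp only [hO, mem_iUnion] at hx
      obtain ⟨d, hdA, hxd⟩ := hx
      refine ⟨d, hdA, hxd, ?_⟩
      filter_upwards [Metric.isOpen_ball.mem_nhds hxd] with w hw
      have hex : ∃ d', d' ∈ A ∧ w ∈ Metric.ball d'.1 d'.2.1 := ⟨d, hdA, hw⟩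
      rw [hUε]
      simp only [dif_pos hex]
      have := huniq _ hex.choose_spec.1 d hdA _ hex.choose_spec.2 hw
      rw [this]
    refine ⟨Uε, ?_, ?_⟩
    · intro x hx
      obtain ⟨d, hdA, hxd, heq⟩ := hloc x hx
      have : ContDiffAt ℝ (⊤:ℕ∞) Uε x :=
        ((hAS.1 d hdA).2.2.1.contDiffAt).congr_of_eventuallyEq heq
      exact this.contDiffWithinAt
    · intro x hx
      obtain ⟨d, hdA, hxd, heq⟩ := hloc x hx
      have hT : TOp e F Uε x = TOp e F d.2.2 x := by
        unfold TOp
        congr 1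
        funext i
        exact (mderiv_eventuallyEq (e i) heq).self_of_nhds
      rw [hT]
      exact (hAS.1 d hdA).2.2.2 x hxd
end

section
/- Let X ⊆ ℝ^n be a nonempty (possibly unbounded) open set, let F : X × ℝ^M → ℝ be jointly continuous, and let f : X → ℝ be continuous with f(x) ∈ int R_x for every x ∈ X. Then for every ε > 0 there exist a subset Γ_ε ⊂ X that is closed and nowhere dense in X and has Lebesgue measure zero, and a smooth function U_ε ∈ C^∞(X ∖ Γ_ε), such that f(x) − ε ≤ T(x,D)U_ε(x) ≤ f(x) for all x ∈ X ∖ Γ_ε. -/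
open Set Topology Filter

/-! ### Auxiliary polynomial machinery -/

/-- The monomial `y ↦ ∏ j, (y j - c j) ^ p j`. -/
def mon {n : ℕ} (c : Fin n → ℝ) (p : Fin n → ℕ) : (Fin n → ℝ) → ℝ :=
  fun y => ∏ j, (y j - c j) ^ p j

lemma contDiff_mon {n : ℕ} (c : Fin n → ℝ) (p : Fin n → ℕ) : ContDiff ℝ (⊤ : ℕ∞) (mon c p) := by
  apply contDiff_prod (f := fun (j : Fin n) (y : Fin n → ℝ) => (y j - c j) ^ p j)
  intro j _
  exact (((contDiff_apply ℝ ℝ j).sub contDiff_const)).pow _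

lemma continuous_mon {n : ℕ} (c : Fin n → ℝ) (p : Fin n → ℕ) : Continuous (mon c p) :=
  (contDiff_mon c p).continuous

lemma differentiable_mon {n : ℕ} (c : Fin n → ℝ) (p : Fin n → ℕ) : Differentiable ℝ (mon c p) :=
  (contDiff_mon c p).differentiable (by simp)

lemma hasFDerivAt_mon {n : ℕ} (c : Fin n → ℝ) (p : Fin n → ℕ) (x : Fin n → ℝ) :
    HasFDerivAt (mon c p) (∑ j, (∏ k ∈ Finset.univ.erase j, (x k - c k) ^ p k) •
      (((p j : ℝ) * (x j - c j) ^ (p j - 1)) • (ContinuousLinearMap.proj j :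
        (Fin n → ℝ) →L[ℝ] ℝ))) x := by
  have h : ∀ j ∈ Finset.univ, HasFDerivAt (fun y : Fin n → ℝ => (y j - c j) ^ p j)
      (((p j : ℝ) * (x j - c j) ^ (p j - 1)) • (ContinuousLinearMap.proj j :
        (Fin n → ℝ) →L[ℝ] ℝ)) x := by
    intro j _
    have hd : HasDerivAt (fun t : ℝ => (t - c j) ^ p j)
        ((p j : ℝ) * (x j - c j) ^ (p j - 1)) (x j) := by
      simpa using (((hasDerivAt_id (x j)).sub_const (c j)).fun_pow (p j))
    have hp : HasFDerivAt (fun y : Fin n → ℝ => y j)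
        (ContinuousLinearMap.proj j : (Fin n → ℝ) →L[ℝ] ℝ) x :=
      (ContinuousLinearMap.proj j : (Fin n → ℝ) →L[ℝ] ℝ).hasFDerivAt
    exact hd.comp_hasFDerivAt (f := fun y : Fin n → ℝ => y j) x hp
  exact HasFDerivAt.finset_prod h

lemma pder_mon {n : ℕ} (c : Fin n → ℝ) (p : Fin n → ℕ) (i : Fin n) :
    pder i (mon c p) = fun y => (p i : ℝ) * mon c (Function.update p i (p i - 1)) y := by
  funext x
  have h := (hasFDerivAt_mon c p x).fderiv
  rw [pder, h]
  simp only [ContinuousLinearMap.coe_sum', Finset.sum_apply, ContinuousLinearMap.coe_smul',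
    Pi.smul_apply, ContinuousLinearMap.proj_apply, smul_eq_mul]
  rw [Finset.sum_eq_single i]
  · simp only [Pi.single_eq_same, mul_one]
    rw [mon]
    rw [← Finset.mul_prod_erase Finset.univ _ (Finset.mem_univ i), Function.update_self]
    have heq : ∏ k ∈ Finset.univ.erase i, (x k - c k) ^ (Function.update p i (p i - 1) k)
        = ∏ k ∈ Finset.univ.erase i, (x k - c k) ^ p k :=
      Finset.prod_congr rfl fun k hk => by rw [Function.update_of_ne (Finset.ne_of_mem_erase hk)]
    rw [heq]; ring
  · intro j _ hj
    simp [Pi.single_eq_of_ne' hj.symm]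
  · simp

lemma pder_sum_mon {n M : ℕ} (c : Fin n → ℝ) (i : Fin n) (b : Fin M → ℝ)
    (P : Fin M → Fin n → ℕ) :
    pder i (fun y => ∑ k, b k * mon c (P k) y)
      = fun y => ∑ k, (b k * (P k i : ℝ)) * mon c (Function.update (P k) i (P k i - 1)) y := by
  funext x
  rw [pder]
  rw [fderiv_fun_sum (fun k _ => ((differentiable_mon c (P k)).const_mul (b k)).differentiableAt)]
  rw [ContinuousLinearMap.sum_apply]
  refine Finset.sum_congr rfl fun k _ => ?_
  rw [fderiv_const_mul ((differentiable_mon c (P k)).differentiableAt) (b k)]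
  have h := congrFun (pder_mon c (P k) i) x
  rw [pder] at h
  simp only [ContinuousLinearMap.coe_smul', Pi.smul_apply, smul_eq_mul]
  rw [h]; ring

lemma pder_iter_sum_mon {n M : ℕ} (c : Fin n → ℝ) (i : Fin n) (t : ℕ) (b : Fin M → ℝ)
    (P : Fin M → Fin n → ℕ) :
    (pder i)^[t] (fun y => ∑ k, b k * mon c (P k) y)
      = fun y => ∑ k, (b k * ((P k i).descFactorial t : ℝ)) *
          mon c (Function.update (P k) i (P k i - t)) y := by
  induction t generalizing b P with
  | zero => simp [Function.update_eq_self]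
  | succ t ih =>
    rw [Function.iterate_succ', Function.comp_apply, ih b P, pder_sum_mon]
    funext y
    refine Finset.sum_congr rfl fun k _ => ?_
    have h1 : Function.update (Function.update (P k) i (P k i - t)) i (P k i - t - 1)
        = Function.update (P k) i (P k i - (t + 1)) := by
      rw [Function.update_idem, Nat.sub_sub]
    have h2 : Function.update (P k) i (P k i - t) i = P k i - t := Function.update_self _ _ _
    rw [h2, h1]
    have h3 : ((P k i).descFactorial (t + 1) : ℝ)
        = ((P k i).descFactorial t : ℝ) * ((P k i - t : ℕ) : ℝ) := by
      rw [Nat.descFactorial_succ]; push_cast; ring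
    rw [h3]; ring

lemma foldr_sum_mon {n M : ℕ} (c : Fin n → ℝ) (q : Fin n → ℕ) (l : List (Fin n)) (hl : l.Nodup)
    (b : Fin M → ℝ) (P : Fin M → Fin n → ℕ) :
    List.foldr (fun i g => (pder i)^[q i] g) (fun y => ∑ k, b k * mon c (P k) y) l
      = fun y => ∑ k, (b k * ∏ j ∈ l.toFinset, ((P k j).descFactorial (q j) : ℝ)) *
          mon c (fun j => if j ∈ l then P k j - q j else P k j) y := by
  induction l with
  | nil => simp
  | cons a l ih =>
    have hal : a ∉ l := (List.nodup_cons.1 hl).1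
    rw [List.foldr_cons, ih (List.nodup_cons.1 hl).2, pder_iter_sum_mon]
    funext y
    refine Finset.sum_congr rfl fun k _ => ?_
    have hPa : (fun j => if j ∈ l then P k j - q j else P k j) a = P k a := by
      simp [hal]
    have hexp : Function.update (fun j => if j ∈ l then P k j - q j else P k j) a
          ((fun j => if j ∈ l then P k j - q j else P k j) a - q a)
        = fun j => if j ∈ a :: l then P k j - q j else P k j := by
      funext j
      rcases eq_or_ne j a with rfl | hj
      · rw [Function.update_self, hPa]; simp
      · rw [Function.update_of_ne hj]
        simp only [List.mem_cons, hj, false_or]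
    have hcoef : ∏ j ∈ (a :: l).toFinset, ((P k j).descFactorial (q j) : ℝ)
        = (∏ j ∈ l.toFinset, ((P k j).descFactorial (q j) : ℝ)) *
          ((P k a).descFactorial (q a) : ℝ) := by
      rw [List.toFinset_cons, Finset.prod_insert (by simpa using hal), mul_comm]
    rw [hexp, if_neg hal, hcoef]; ring

lemma mderiv_sum_mon {n M : ℕ} (c : Fin n → ℝ) (q : Fin n → ℕ) (b : Fin M → ℝ)
    (P : Fin M → Fin n → ℕ) :
    mderiv q (fun y => ∑ k, b k * mon c (P k) y)
      = fun y => ∑ k, (b k * ∏ j, ((P k j).descFactorial (q j) : ℝ)) *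
          mon c (fun j => P k j - q j) y := by
  rw [mderiv, foldr_sum_mon c q _ (List.nodup_finRange n)]
  simp [List.mem_finRange]

lemma mon_self_of_pos {n : ℕ} (c : Fin n → ℝ) (p : Fin n → ℕ) (j : Fin n) (h : 0 < p j) :
    mon c p c = 0 := by
  rw [mon]
  exact Finset.prod_eq_zero (Finset.mem_univ j) (by simp [sub_self, zero_pow h.ne'])

/-- A smooth function with prescribed multi-index derivatives of orders `e i` at `x`,
whose derivatives depend continuously on the point. -/
lemma exists_taylor {n M : ℕ} (e : Fin M → (Fin n → ℕ)) (he : Function.Injective e)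
    (x : Fin n → ℝ) (ξ : Fin M → ℝ) :
    ∃ P : (Fin n → ℝ) → ℝ, ContDiff ℝ (⊤ : ℕ∞) P ∧
      (∀ q : Fin n → ℕ, Continuous (mderiv q P)) ∧
      ∀ i, mderiv (e i) P x = ξ i := by
  set N : Fin M → ℝ := fun k => ∏ j, ((e k j).factorial : ℝ) with hNdef
  have hN : ∀ k, N k ≠ 0 := fun k =>
    Finset.prod_ne_zero_iff.2 fun j _ => Nat.cast_ne_zero.2 (Nat.factorial_ne_zero _)
  refine ⟨fun y => ∑ k, (ξ k / N k) * mon x (e k) y, ?_, ?_, ?_⟩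
  · exact ContDiff.sum fun k _ => contDiff_const.mul (contDiff_mon x (e k))
  · intro q
    rw [mderiv_sum_mon]
    exact continuous_finset_sum _ fun k _ => continuous_const.mul (continuous_mon x _)
  · intro i
    have h := congrFun (mderiv_sum_mon x (e i) (fun k => ξ k / N k) e) x
    rw [h]
    rw [Finset.sum_eq_single i]
    · have h1 : (fun j => e i j - e i j) = fun _ : Fin n => 0 := by funext j; simp
      have h2 : mon x (fun _ : Fin n => 0) x = 1 := by simp [mon]
      rw [h1, h2, mul_one]
      have h3 : ∏ j, (((e i j).descFactorial (e i j) : ℕ) : ℝ) = N i := by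
        rw [hNdef]
        exact Finset.prod_congr rfl fun j _ => by rw [Nat.descFactorial_self]
      rw [h3, div_mul_cancel₀ _ (hN i)]
    · intro k _ hk
      have hne : e k ≠ e i := fun hEq => hk (he hEq)
      by_cases hlt : ∃ j, e k j < e i j
      · obtain ⟨j, hj⟩ := hlt
        have : (((e k j).descFactorial (e i j) : ℕ) : ℝ) = 0 := by
          rw [Nat.descFactorial_eq_zero_iff_lt.2 hj]; simp
        rw [Finset.prod_eq_zero (Finset.mem_univ j) this]
        ring
      · push_neg at hlt
        obtain ⟨j, hj⟩ : ∃ j, e i j < e k j := by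
          by_contra hc
          push_neg at hc
          exact hne (funext fun j => le_antisymm (hc j) (hlt j))
        rw [mon_self_of_pos x _ j (by omega)]
        ring
    · simp

/-! ### Locality of `mderiv` -/

lemma pder_eqOn {n : ℕ} {s : Set (Fin n → ℝ)} (hs : IsOpen s) {f g : (Fin n → ℝ) → ℝ}
    (h : Set.EqOn f g s) (i : Fin n) : Set.EqOn (pder i f) (pder i g) s := fun y hy => by
  rw [pder, pder, Filter.EventuallyEq.fderiv_eq (h.eventuallyEq_of_mem (hs.mem_nhds hy))]

lemma pder_iter_eqOn {n : ℕ} {s : Set (Fin n → ℝ)} (hs : IsOpen s) {f g : (Fin n → ℝ) → ℝ}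
    (h : Set.EqOn f g s) (i : Fin n) (t : ℕ) :
    Set.EqOn ((pder i)^[t] f) ((pder i)^[t] g) s := by
  induction t generalizing f g with
  | zero => exact h
  | succ t ih =>
    rw [Function.iterate_succ_apply, Function.iterate_succ_apply]
    exact ih (pder_eqOn hs h i)

lemma mderiv_eqOn {n : ℕ} {s : Set (Fin n → ℝ)} (hs : IsOpen s) {f g : (Fin n → ℝ) → ℝ}
    (h : Set.EqOn f g s) (p : Fin n → ℕ) : Set.EqOn (mderiv p f) (mderiv p g) s := by
  rw [mderiv, mderiv]
  induction (List.finRange n) with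
  | nil => exact h
  | cons a l ih => exact pder_iter_eqOn hs ih a (p a)

/-! ### The key local lemma -/

lemma key_lemma {n M : ℕ} {X : Set (Fin n → ℝ)} (hXopen : IsOpen X)
    (e : Fin M → (Fin n → ℕ)) (he : Function.Injective e)
    {F : (Fin n → ℝ) → (Fin M → ℝ) → ℝ}
    (hF : ContinuousOn (fun q : (Fin n → ℝ) × (Fin M → ℝ) => F q.1 q.2) (X ×ˢ Set.univ))
    {f : (Fin n → ℝ) → ℝ} (hf : ContinuousOn f X)
    (hrc : ∀ x ∈ X, f x ∈ interior (Set.range (F x)))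
    {ε : ℝ} (hε : 0 < ε) :
    ∀ x ∈ X, ∃ r : ℝ, 0 < r ∧ Metric.ball x (2 * r) ⊆ X ∧
      ∃ P, ContDiff ℝ (⊤ : ℕ∞) P ∧
        ∀ y ∈ Metric.ball x (2 * r), f y - ε ≤ TOp e F P y ∧ TOp e F P y ≤ f y := by
  intro x hx
  obtain ⟨δ, hδ, hball⟩ := Metric.mem_nhds_iff.1 (mem_interior_iff_mem_nhds.1 (hrc x hx))
  set η : ℝ := min (δ / 2) (ε / 2) with hηdef
  have hη : 0 < η := lt_min (by linarith) (by linarith)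
  have hηδ : η < δ := lt_of_le_of_lt (min_le_left _ _) (by linarith)
  have hηε : 2 * η ≤ ε := by
    have := min_le_right (δ / 2) (ε / 2); linarith
  set t : ℝ := f x - η with htdef
  have ht : t ∈ Metric.ball (f x) δ := by
    rw [Metric.mem_ball, Real.dist_eq, htdef]
    rw [abs_of_nonpos (by linarith)]
    simp; linarith
  obtain ⟨ξ, hξ⟩ := hball ht
  obtain ⟨P, hPs, hPc, hPx⟩ := exists_taylor e he x ξ
  set G : (Fin n → ℝ) → ℝ := TOp e F P with hGdef
  have hGx : G x = t := by
    rw [hGdef, TOp]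
    have : (fun i => mderiv (e i) P x) = ξ := funext hPx
    rw [this, hξ]
  have hG : ContinuousAt G x := by
    have hFx : ContinuousAt (fun q : (Fin n → ℝ) × (Fin M → ℝ) => F q.1 q.2)
        (x, fun i => mderiv (e i) P x) :=
      hF.continuousAt ((hXopen.prod isOpen_univ).mem_nhds ⟨hx, mem_univ _⟩)
    have hin : ContinuousAt (fun y : Fin n → ℝ => (y, fun i => mderiv (e i) P y)) x :=
      (continuous_id.prodMk (continuous_pi fun i => hPc (e i))).continuousAt
    exact ContinuousAt.comp (g := fun q : (Fin n → ℝ) × (Fin M → ℝ) => F q.1 q.2)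
      (f := fun y : Fin n → ℝ => (y, fun i => mderiv (e i) P y)) hFx hin
  have hfx : ContinuousAt f x := hf.continuousAt (hXopen.mem_nhds hx)
  have h1 : ∀ᶠ y in 𝓝 x, dist (G y) (G x) < η / 2 :=
    Metric.tendsto_nhds.mp hG (η / 2) (by linarith)
  have h2 : ∀ᶠ y in 𝓝 x, dist (f y) (f x) < η / 2 :=
    Metric.tendsto_nhds.mp hfx (η / 2) (by linarith)
  have h3 : ∀ᶠ y in 𝓝 x, y ∈ X := hXopen.mem_nhds hx
  obtain ⟨ρ, hρ, hsub⟩ := Metric.mem_nhds_iff.1 ((h1.and h2).and h3)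
  refine ⟨ρ / 4, by linarith, ?_, P, hPs, ?_⟩
  · intro y hy
    have : y ∈ Metric.ball x ρ := by
      rw [Metric.mem_ball] at hy ⊢; linarith
    exact (hsub this).2
  · intro y hy
    have hyρ : y ∈ Metric.ball x ρ := by
      rw [Metric.mem_ball] at hy ⊢; linarith
    obtain ⟨⟨hG1, hf1⟩, _⟩ := hsub hyρ
    rw [hGx, Real.dist_eq] at hG1
    rw [Real.dist_eq] at hf1
    rw [abs_lt] at hG1 hf1
    constructor
    · show f y - ε ≤ G y
      linarith
    · show G y ≤ f y
      linarith

/-- **Proposition 1 with Remark 1.1.** As in Proposition 1, and in addition the closed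
nowhere dense singularity set `Γ_ε` can be chosen with Lebesgue measure zero. -/
theorem approximate_solution_off_closed_nowhere_dense_null
    {n m M : ℕ} (X : Set (Fin n → ℝ)) (hXopen : IsOpen X) (hXne : X.Nonempty)
    (e : Fin M → (Fin n → ℕ)) (he : Function.Injective e)
    (hrange : ∀ p : Fin n → ℕ, (∑ i, p i) ≤ m ↔ p ∈ Set.range e)
    (F : (Fin n → ℝ) → (Fin M → ℝ) → ℝ)
    (hF : ContinuousOn (fun q : (Fin n → ℝ) × (Fin M → ℝ) => F q.1 q.2) (X ×ˢ Set.univ))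
    (f : (Fin n → ℝ) → ℝ) (hf : ContinuousOn f X)
    (hrc : ∀ x ∈ X, f x ∈ interior (Set.range (F x))) :
    ∀ ε > (0 : ℝ), ∃ Γ : Set (Fin n → ℝ), Γ ⊆ X ∧
      IsClosed (Subtype.val ⁻¹' Γ : Set X) ∧
      IsNowhereDense (Subtype.val ⁻¹' Γ : Set X) ∧
      MeasureTheory.volume Γ = 0 ∧
      ∃ U : (Fin n → ℝ) → ℝ, ContDiffOn ℝ (⊤ : ℕ∞) U (X \ Γ) ∧
        ∀ x ∈ X \ Γ, f x - ε ≤ TOp e F U x ∧ TOp e F U x ≤ f x := by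
  classical
  intro ε hε
  have key := key_lemma hXopen e he hF hf hrc hε
  have key' : ∀ x : X, ∃ r : ℝ, 0 < r ∧ Metric.ball (x : Fin n → ℝ) (2 * r) ⊆ X ∧
      ∃ P, ContDiff ℝ (⊤ : ℕ∞) P ∧
        ∀ y ∈ Metric.ball (x : Fin n → ℝ) (2 * r),
          f y - ε ≤ TOp e F P y ∧ TOp e F P y ≤ f y :=
    fun x => key x x.2
  choose r hr hsub P hPs hPb using key'
  obtain ⟨T, hTc, hTU⟩ := TopologicalSpace.isOpen_iUnion_countable
    (fun x : X => Metric.ball (x : Fin n → ℝ) (r x)) (fun x => Metric.isOpen_ball)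
  have hTne : T.Nonempty := by
    obtain ⟨x0, hx0⟩ := hXne
    have : x0 ∈ ⋃ x : X, Metric.ball (x : Fin n → ℝ) (r x) :=
      mem_iUnion.2 ⟨⟨x0, hx0⟩, Metric.mem_ball_self (hr _)⟩
    rw [← hTU] at this
    obtain ⟨x, hxT, -⟩ := mem_iUnion₂.1 this
    exact ⟨x, hxT⟩
  obtain ⟨g, hg⟩ := hTc.exists_eq_range hTne
  set B : ℕ → Set (Fin n → ℝ) := fun k => Metric.ball ((g k : Fin n → ℝ)) (r (g k)) with hBdef
  set V : ℕ → Set (Fin n → ℝ) :=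
    fun k => B k \ ⋃ j ∈ Finset.range k, Metric.closedBall ((g j : Fin n → ℝ)) (r (g j))
    with hVdef
  have hVopen : ∀ k, IsOpen (V k) := fun k =>
    Metric.isOpen_ball.sdiff (isClosed_biUnion_finset fun j _ => Metric.isClosed_closedBall)
  have hVB : ∀ k, V k ⊆ B k := fun k => diff_subset
  have hBX : ∀ k, B k ⊆ X := fun k => fun y hy =>
    hsub (g k) (by rw [Metric.mem_ball] at hy ⊢; have := hr (g k); linarith)
  have hVdisj : ∀ j k, j ≠ k → ∀ y, y ∈ V j → y ∈ V k → False := by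
    intro j k hjk y hyj hyk
    rcases lt_or_gt_of_ne hjk with h | h
    · exact hyk.2 (mem_iUnion₂.2 ⟨j, Finset.mem_range.2 h, Metric.ball_subset_closedBall hyj.1⟩)
    · exact hyj.2 (mem_iUnion₂.2 ⟨k, Finset.mem_range.2 h, Metric.ball_subset_closedBall hyk.1⟩)
  have hBcov : X ⊆ ⋃ k, B k := by
    intro y hy
    have h1 : y ∈ ⋃ x : X, Metric.ball (x : Fin n → ℝ) (r x) :=
      mem_iUnion.2 ⟨⟨y, hy⟩, Metric.mem_ball_self (hr _)⟩
    rw [← hTU, hg, biUnion_range] at h1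
    exact h1
  set Γ : Set (Fin n → ℝ) := X \ ⋃ k, V k with hΓdef
  have hΓsph : Γ ⊆ ⋃ k, Metric.sphere ((g k : Fin n → ℝ)) (r (g k)) := by
    intro y hy
    obtain ⟨hyX, hyV⟩ := hy
    have hex : ∃ k, y ∈ Metric.closedBall ((g k : Fin n → ℝ)) (r (g k)) := by
      obtain ⟨k, hk⟩ := mem_iUnion.1 (hBcov hyX)
      exact ⟨k, Metric.ball_subset_closedBall hk⟩
    set k0 := Nat.find hex with hk0def
    have hk0 : y ∈ Metric.closedBall ((g k0 : Fin n → ℝ)) (r (g k0)) := Nat.find_spec hex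
    have hnb : y ∉ B k0 := by
      intro hyB
      apply hyV
      refine mem_iUnion.2 ⟨k0, hyB, ?_⟩
      intro hmem
      obtain ⟨j, hj, hyj⟩ := mem_iUnion₂.1 hmem
      exact Nat.find_min hex (Finset.mem_range.1 hj) hyj
    refine mem_iUnion.2 ⟨k0, ?_⟩
    rw [Metric.mem_closedBall] at hk0
    rw [hBdef] at hnb
    simp only [Metric.mem_ball, not_lt] at hnb
    rw [Metric.mem_sphere]
    exact le_antisymm hk0 hnb
  have hΓvol : MeasureTheory.volume Γ = 0 := by
    refine MeasureTheory.measure_mono_null hΓsph ?_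
    refine MeasureTheory.measure_iUnion_null fun k => ?_
    exact MeasureTheory.Measure.addHaar_sphere_of_ne_zero _ _ (hr (g k)).ne'
  set U : (Fin n → ℝ) → ℝ :=
    fun y => if h : ∃ k, y ∈ V k then P (g (Nat.find h)) y else 0 with hUdef
  have hUV : ∀ k, Set.EqOn U (P (g k)) (V k) := by
    intro k y hy
    have h : ∃ j, y ∈ V j := ⟨k, hy⟩
    have hj : y ∈ V (Nat.find h) := Nat.find_spec h
    have : Nat.find h = k := by
      by_contra hne
      exact hVdisj _ _ hne y hj hy
    rw [hUdef]
    simp only [dif_pos h, this]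
  have hXΓ : X \ Γ = ⋃ k, V k := by
    rw [hΓdef, diff_diff_right_self]
    exact inter_eq_self_of_subset_right (iUnion_subset fun k => (hVB k).trans (hBX k))
  refine ⟨Γ, diff_subset, ?_, ?_, hΓvol, U, ?_, ?_⟩
  · have hpre : (Subtype.val ⁻¹' Γ : Set X) = (Subtype.val ⁻¹' (⋃ k, V k))ᶜ := by
      ext ⟨y, hy⟩
      simp [hΓdef, hy]
    rw [hpre]
    exact (isOpen_iUnion hVopen |>.preimage continuous_subtype_val).isClosed_compl
  · have hclosed : IsClosed (Subtype.val ⁻¹' Γ : Set X) := by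
      have hpre : (Subtype.val ⁻¹' Γ : Set X) = (Subtype.val ⁻¹' (⋃ k, V k))ᶜ := by
        ext ⟨y, hy⟩
        simp [hΓdef, hy]
      rw [hpre]
      exact (isOpen_iUnion hVopen |>.preimage continuous_subtype_val).isClosed_compl
    rw [IsNowhereDense, hclosed.closure_eq]
    rw [← (hXopen.isOpenMap_subtype_val).preimage_interior_eq_interior_preimage
      continuous_subtype_val]
    have hint : interior Γ = ∅ := by
      by_contra hne
      have hpos := (isOpen_interior (s := Γ)).measure_pos (μ := MeasureTheory.volume)
        (Set.nonempty_iff_ne_empty.2 hne)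
      exact absurd (le_antisymm (hΓvol ▸ MeasureTheory.measure_mono interior_subset)
        (zero_le)) hpos.ne'
    rw [hint, preimage_empty]
  · rw [hXΓ]
    intro y hy
    obtain ⟨k, hyk⟩ := mem_iUnion.1 hy
    have hev : U =ᶠ[𝓝 y] P (g k) :=
      Filter.eventuallyEq_of_mem ((hVopen k).mem_nhds hyk) (hUV k)
    exact ((hPs (g k)).contDiffAt.congr_of_eventuallyEq hev).contDiffWithinAt
  · intro y hy
    rw [hXΓ] at hy
    obtain ⟨k, hyk⟩ := mem_iUnion.1 hy
    have hTeq : TOp e F U y = TOp e F (P (g k)) y := by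
      rw [TOp, TOp]
      congr 1
      funext i
      exact mderiv_eqOn (hVopen k) (hUV k) (e i) hyk
    rw [hTeq]
    exact hPb (g k) y (by
      have := hVB k hyk
      rw [hBdef, Metric.mem_ball] at this
      rw [Metric.mem_ball]
      have := hr (g k)
      rw [hBdef] at *
      linarith [ (hVB k hyk : y ∈ B k) ])
end

section
/- Let X ⊆ ℝ^n be a nonempty (possibly unbounded) open set, let F : X × ℝ^M → ℝ be an arbitrary function (no continuity is required), let f : X → ℝ be a function, and let X_sol ⊆ X be a nonempty subset such that f(x) ∈ R_x for every x ∈ X_sol. Then for every subset A ⊆ X_sol that is discrete and closed in X there exists a smooth function U ∈ C^∞(X) such that T(x,D)U(x) = f(x) for every x ∈ A. -/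
open Set Topology Filter

noncomputable def SM {n : ℕ} (c : ℝ) (a : Fin n → ℝ) (q : Fin n → ℕ) : (Fin n → ℝ) → ℝ :=
  fun x => c * ∏ k, (x k - a k) ^ (q k)

lemma contDiff_SM {n : ℕ} (c : ℝ) (a : Fin n → ℝ) (q : Fin n → ℕ) :
    ContDiff ℝ (⊤ : ℕ∞) (SM c a q) := by
  apply ContDiff.mul contDiff_const
  apply contDiff_prod
  intro k _
  have : ContDiff ℝ (⊤ : ℕ∞) (fun y : Fin n → ℝ => y k - a k) :=
    (ContinuousLinearMap.proj k : (Fin n → ℝ) →L[ℝ] ℝ).contDiff.sub contDiff_const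
  exact this.pow _

lemma differentiable_SM {n : ℕ} (c : ℝ) (a : Fin n → ℝ) (q : Fin n → ℕ) :
    Differentiable ℝ (SM c a q) :=
  (contDiff_SM c a q).differentiable (by simp)

lemma hasFDerivAt_factor {n : ℕ} (a : Fin n → ℝ) (q : Fin n → ℕ) (k : Fin n) (x : Fin n → ℝ) :
    HasFDerivAt (fun y : Fin n → ℝ => (y k - a k) ^ (q k))
      (((q k : ℝ) * (x k - a k) ^ (q k - 1)) • (ContinuousLinearMap.proj k : (Fin n → ℝ) →L[ℝ] ℝ)) x := by
  have hg : HasFDerivAt (fun y : Fin n → ℝ => y k - a k)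
      (ContinuousLinearMap.proj k : (Fin n → ℝ) →L[ℝ] ℝ) x := by
    simpa using ((ContinuousLinearMap.proj k : (Fin n → ℝ) →L[ℝ] ℝ).hasFDerivAt (x := x)).sub_const (a k)
  exact (hasDerivAt_pow (q k) (x k - a k)).comp_hasFDerivAt x hg

lemma pder_SM {n : ℕ} (c : ℝ) (a : Fin n → ℝ) (q : Fin n → ℕ) (i : Fin n) :
    pder i (SM c a q) = SM (c * q i) a (Function.update q i (q i - 1)) := by
  funext x
  have hprod : HasFDerivAt (fun y : Fin n → ℝ => ∏ k, (y k - a k) ^ (q k))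
      (∑ k, (∏ j ∈ Finset.univ.erase k, (x j - a j) ^ (q j)) •
        (((q k : ℝ) * (x k - a k) ^ (q k - 1)) • (ContinuousLinearMap.proj k : (Fin n → ℝ) →L[ℝ] ℝ))) x :=
    HasFDerivAt.finset_prod (fun k _ => hasFDerivAt_factor a q k x)
  have hf : HasFDerivAt (SM c a q)
      (c • (∑ k, (∏ j ∈ Finset.univ.erase k, (x j - a j) ^ (q j)) •
        (((q k : ℝ) * (x k - a k) ^ (q k - 1)) • (ContinuousLinearMap.proj k : (Fin n → ℝ) →L[ℝ] ℝ)))) x :=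
    hprod.const_mul c
  show fderiv ℝ (SM c a q) x (Pi.single i 1) = _
  rw [hf.fderiv]
  simp only [ContinuousLinearMap.coe_smul', Pi.smul_apply, ContinuousLinearMap.coe_sum',
    Finset.sum_apply, ContinuousLinearMap.smul_apply, ContinuousLinearMap.proj_apply,
    smul_eq_mul]
  rw [Finset.sum_eq_single i]
  · have hupd : ∏ k, (x k - a k) ^ (Function.update q i (q i - 1) k)
        = (x i - a i) ^ (q i - 1) * ∏ j ∈ Finset.univ.erase i, (x j - a j) ^ (q j) := by
      rw [← Finset.mul_prod_erase Finset.univ _ (Finset.mem_univ i)]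
      rw [Function.update_self]
      congr 1
      exact Finset.prod_congr rfl fun j hj => by
        rw [Function.update_of_ne (Finset.ne_of_mem_erase hj)]
    simp only [SM, hupd, Pi.single_eq_same]
    ring
  · intro k _ hk
    have h0 : (Pi.single i (1:ℝ) : Fin n → ℝ) k = 0 := by
      simp [Pi.single_apply, hk]
    rw [h0]; ring
  · simp

lemma iter_pder_SM {n : ℕ} (i : Fin n) (t : ℕ) (c : ℝ) (a : Fin n → ℝ) (q : Fin n → ℕ) :
    (pder i)^[t] (SM c a q)
      = SM (c * ((q i).descFactorial t)) a (Function.update q i (q i - t)) := by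
  induction t generalizing c q with
  | zero => simp [Function.update_eq_self]
  | succ t ih =>
      rw [Function.iterate_succ_apply, pder_SM, ih]
      have hcoef : (Function.update q i (q i - 1)) i = q i - 1 := Function.update_self _ _ _
      rw [hcoef]
      have h1 : c * ↑(q i) * ↑((q i - 1).descFactorial t) = c * ↑((q i).descFactorial (t + 1)) := by
        have : (q i) * ((q i - 1).descFactorial t) = (q i).descFactorial (t + 1) := by
          cases h : q i with
          | zero => simp
          | succ s => rw [Nat.succ_descFactorial_succ]; norm_num
        push_cast [← this]
        ring
      have h2 : Function.update (Function.update q i (q i - 1)) i (q i - 1 - t)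
          = Function.update q i (q i - (t + 1)) := by
        rw [Function.update_idem]
        have he : q i - 1 - t = q i - (t + 1) := by omega
        rw [he]
      rw [h1, h2]




lemma pder_congr {n : ℕ} (i : Fin n) {V : Set (Fin n → ℝ)} (hV : IsOpen V)
    {f g : (Fin n → ℝ) → ℝ} (h : Set.EqOn f g V) : Set.EqOn (pder i f) (pder i g) V := by
  intro x hx
  show fderiv ℝ f x (Pi.single i 1) = fderiv ℝ g x (Pi.single i 1)
  rw [Filter.EventuallyEq.fderiv_eq (h.eventuallyEq_of_mem (hV.mem_nhds hx))]

lemma iter_pder_congr {n : ℕ} (i : Fin n) (t : ℕ) {V : Set (Fin n → ℝ)} (hV : IsOpen V)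
    {f g : (Fin n → ℝ) → ℝ} (h : Set.EqOn f g V) :
    Set.EqOn ((pder i)^[t] f) ((pder i)^[t] g) V := by
  induction t generalizing f g with
  | zero => exact h
  | succ t ih => exact ih (pder_congr i hV h)

lemma mderiv_congr {n : ℕ} (p : Fin n → ℕ) {V : Set (Fin n → ℝ)} (hV : IsOpen V)
    {f g : (Fin n → ℝ) → ℝ} (h : Set.EqOn f g V) :
    Set.EqOn (mderiv p f) (mderiv p g) V := by
  unfold mderiv
  generalize List.finRange n = L
  induction L generalizing f g with
  | nil => exact h
  | cons i L ih => exact iter_pder_congr i (p i) hV (ih h)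

lemma pder_sum_s7 {n M : ℕ} (i : Fin n) (a : Fin n → ℝ) (c : Fin M → ℝ) (q : Fin M → Fin n → ℕ) :
    pder i (fun x => ∑ j, SM (c j) a (q j) x)
      = fun x => ∑ j, pder i (SM (c j) a (q j)) x := by
  funext x
  show fderiv ℝ _ x _ = _
  rw [fderiv_fun_sum (fun j _ => (differentiable_SM (c j) a (q j)).differentiableAt)]
  simp only [ContinuousLinearMap.coe_sum', Finset.sum_apply]
  rfl

lemma iter_pder_sum_s7 {n M : ℕ} (i : Fin n) (t : ℕ) (a : Fin n → ℝ) (c : Fin M → ℝ)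
    (q : Fin M → Fin n → ℕ) :
    (pder i)^[t] (fun x => ∑ j, SM (c j) a (q j) x)
      = fun x => ∑ j, (pder i)^[t] (SM (c j) a (q j)) x := by
  induction t generalizing c q with
  | zero => rfl
  | succ t ih =>
    rw [Function.iterate_succ_apply, pder_sum_s7]
    have hrw : (fun x => ∑ j, pder i (SM (c j) a (q j)) x)
        = fun x => ∑ j, SM (c j * (q j i)) a (Function.update (q j) i (q j i - 1)) x := by
      funext x
      exact Finset.sum_congr rfl fun j _ => by rw [pder_SM]
    rw [hrw, ih]
    funext x
    refine Finset.sum_congr rfl fun j _ => ?_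
    rw [Function.iterate_succ_apply, pder_SM]

lemma foldr_sum {n M : ℕ} (p : Fin n → ℕ) (L : List (Fin n)) (a : Fin n → ℝ)
    (c : Fin M → ℝ) (q : Fin M → Fin n → ℕ) :
    L.foldr (fun i g => (pder i)^[p i] g) (fun x => ∑ j, SM (c j) a (q j) x)
      = fun x => ∑ j, (L.foldr (fun i g => (pder i)^[p i] g) (SM (c j) a (q j))) x := by
  -- first, the foldr of an SM is again an SM
  have shape : ∀ (L' : List (Fin n)) (c₀ : ℝ) (q₀ : Fin n → ℕ), ∃ c' q',
      L'.foldr (fun i g => (pder i)^[p i] g) (SM c₀ a q₀) = SM c' a q' := by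
    intro L'
    induction L' with
    | nil => exact fun c₀ q₀ => ⟨c₀, q₀, rfl⟩
    | cons i L' ih =>
      intro c₀ q₀
      obtain ⟨c', q', h⟩ := ih c₀ q₀
      exact ⟨_, _, by rw [List.foldr_cons, h, iter_pder_SM]⟩
  induction L with
  | nil => rfl
  | cons i L ih =>
    rw [List.foldr_cons, ih]
    choose c' q' hcq using fun j => shape L (c j) (q j)
    have hrw : (fun x => ∑ j, (L.foldr (fun i g => (pder i)^[p i] g) (SM (c j) a (q j))) x)
        = fun x => ∑ j, SM (c' j) a (q' j) x := by
      funext x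
      exact Finset.sum_congr rfl fun j _ => by rw [hcq]
    rw [hrw, iter_pder_sum_s7]
    funext x
    refine Finset.sum_congr rfl fun j _ => ?_
    rw [List.foldr_cons, hcq]

lemma foldr_SM_closed {n : ℕ} (p : Fin n → ℕ) (L : List (Fin n)) (hL : L.Nodup)
    (c : ℝ) (a : Fin n → ℝ) (q : Fin n → ℕ) :
    L.foldr (fun i g => (pder i)^[p i] g) (SM c a q)
      = SM (c * ((L.map fun i => (((q i).descFactorial (p i) : ℕ) : ℝ)).prod)) a
          (fun i => if i ∈ L then q i - p i else q i) := by
  induction L with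
  | nil => simp
  | cons i L ih =>
    have hiL : i ∉ L := (List.nodup_cons.mp hL).1
    rw [List.foldr_cons, ih (List.nodup_cons.mp hL).2, iter_pder_SM]
    rw [if_neg hiL]
    have hexp : Function.update (fun k => if k ∈ L then q k - p k else q k) i (q i - p i)
        = fun k => if k ∈ i :: L then q k - p k else q k := by
      funext k
      by_cases hk : k = i
      · subst hk; simp [Function.update_self]
      · rw [Function.update_of_ne hk]
        by_cases hkL : k ∈ L <;> simp [hkL, hk, List.mem_cons]
    rw [hexp]
    congr 1
    rw [List.map_cons, List.prod_cons]
    ring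

lemma mderiv_SM {n : ℕ} (p : Fin n → ℕ) (c : ℝ) (a : Fin n → ℝ) (q : Fin n → ℕ) :
    mderiv p (SM c a q)
      = SM (c * ∏ i, (((q i).descFactorial (p i) : ℕ) : ℝ)) a (fun i => q i - p i) := by
  unfold mderiv
  rw [foldr_SM_closed p _ (List.nodup_finRange n) c a q]
  have h1 : ((List.finRange n).map fun i => (((q i).descFactorial (p i) : ℕ) : ℝ)).prod
      = ∏ i, (((q i).descFactorial (p i) : ℕ) : ℝ) := (Fin.prod_univ_def _).symm
  have h2 : (fun i => if i ∈ List.finRange n then q i - p i else q i) = fun i => q i - p i := by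
    funext i; simp [List.mem_finRange]
  rw [h1, h2]

lemma SM_eval_self {n : ℕ} (c : ℝ) (a : Fin n → ℝ) (q : Fin n → ℕ) :
    SM c a q a = if (∀ k, q k = 0) then c else 0 := by
  unfold SM
  by_cases h : ∀ k, q k = 0
  · rw [if_pos h]
    have h1 : ∀ k ∈ Finset.univ, (a k - a k) ^ (q k) = 1 := fun k _ => by rw [h k]; simp
    rw [Finset.prod_congr rfl h1]
    simp
  · rw [if_neg h]
    push_neg at h
    obtain ⟨k, hk⟩ := h
    have : (a k - a k) ^ (q k) = 0 := by rw [sub_self, zero_pow hk]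
    rw [Finset.prod_eq_zero (Finset.mem_univ k) this, mul_zero]

noncomputable def PolyA {n M : ℕ} (a : Fin n → ℝ) (ξ : Fin M → ℝ) (e : Fin M → Fin n → ℕ) :
    (Fin n → ℝ) → ℝ :=
  fun x => ∑ j, SM (ξ j / ∏ k, (((e j k).factorial : ℕ) : ℝ)) a (e j) x

lemma contDiff_PolyA {n M : ℕ} (a : Fin n → ℝ) (ξ : Fin M → ℝ) (e : Fin M → Fin n → ℕ) :
    ContDiff ℝ (⊤ : ℕ∞) (PolyA a ξ e) :=
  ContDiff.sum fun j _ => contDiff_SM _ a (e j)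

lemma mderiv_PolyA {n M : ℕ} (a : Fin n → ℝ) (ξ : Fin M → ℝ) (e : Fin M → Fin n → ℕ)
    (he : Function.Injective e) (i0 : Fin M) :
    mderiv (e i0) (PolyA a ξ e) a = ξ i0 := by
  have hsum : mderiv (e i0) (PolyA a ξ e)
      = fun x => ∑ j, (mderiv (e i0) (SM (ξ j / ∏ k, (((e j k).factorial : ℕ) : ℝ)) a (e j))) x := by
    unfold PolyA mderiv
    exact foldr_sum (e i0) (List.finRange n) a _ _
  rw [hsum]
  simp only []
  have hterm : ∀ j, mderiv (e i0) (SM (ξ j / ∏ k, (((e j k).factorial : ℕ) : ℝ)) a (e j)) a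
      = if (∀ k, e j k - e i0 k = 0)
          then (ξ j / ∏ k, (((e j k).factorial : ℕ) : ℝ)) * ∏ i, (((e j i).descFactorial (e i0 i) : ℕ) : ℝ)
          else 0 := by
    intro j
    rw [mderiv_SM, SM_eval_self]
  show (∑ j, mderiv (e i0) (SM (ξ j / ∏ k, (((e j k).factorial : ℕ) : ℝ)) a (e j)) a) = ξ i0
  rw [Finset.sum_eq_single i0]
  · rw [hterm i0]
    rw [if_pos (fun k => Nat.sub_self _)]
    have hdesc : ∀ i : Fin n, (e i0 i).descFactorial (e i0 i) = (e i0 i).factorial :=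
      fun i => Nat.descFactorial_self _
    have hprod : (∏ i, (((e i0 i).descFactorial (e i0 i) : ℕ) : ℝ)) = ∏ i, (((e i0 i).factorial : ℕ) : ℝ) :=
      Finset.prod_congr rfl fun i _ => by rw [hdesc i]
    rw [hprod]
    have hne : (∏ i, (((e i0 i).factorial : ℕ) : ℝ)) ≠ 0 :=
      Finset.prod_ne_zero_iff.mpr fun i _ => Nat.cast_ne_zero.mpr (Nat.factorial_ne_zero _)
    field_simp
  · intro j _ hj
    rw [hterm j]
    have hne : e j ≠ e i0 := fun h => hj (he h)
    by_cases h : ∀ k, e i0 k ≤ e j k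
    · -- then ∃ k, e i0 k < e j k, so the subtraction is nonzero
      have : ∃ k, e i0 k < e j k := by
        by_contra hc
        push_neg at hc
        exact hne (funext fun k => le_antisymm (hc k) (h k))
      obtain ⟨k, hk⟩ := this
      rw [if_neg]
      intro hall
      have := hall k
      omega
    · push_neg at h
      obtain ⟨k, hk⟩ := h
      have hd : (e j k).descFactorial (e i0 k) = 0 :=
        Nat.descFactorial_eq_zero_iff_lt.mpr hk
      have hzero : (∏ i, (((e j i).descFactorial (e i0 i) : ℕ) : ℝ)) = 0 :=
        Finset.prod_eq_zero (Finset.mem_univ k) (by rw [hd]; simp)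
      rw [hzero, mul_zero]
      simp
  · intro h
    exact absurd (Finset.mem_univ i0) h


/-- **Proposition 2.** Let `X ⊆ ℝⁿ` be a nonempty open set, `F : X × ℝᴹ → ℝ` an arbitrary
function, `f : X → ℝ` a function, and `X_sol ⊆ X` nonempty with `f(x) ∈ R_x` for all
`x ∈ X_sol`. Then for every `A ⊆ X_sol` which is discrete and closed in `X` (every point of
`X` has a neighbourhood meeting `A` in at most one point) there is `U ∈ C^∞(X)` with
`T(x,D)U(x) = f(x)` for all `x ∈ A`. -/
theorem exact_solution_on_discrete_sets
    {n m M : ℕ} (X : Set (Fin n → ℝ)) (hXopen : IsOpen X) (hXne : X.Nonempty)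
    (e : Fin M → (Fin n → ℕ)) (he : Function.Injective e)
    (hrange : ∀ p : Fin n → ℕ, (∑ i, p i) ≤ m ↔ p ∈ Set.range e)
    (F : (Fin n → ℝ) → (Fin M → ℝ) → ℝ) (f : (Fin n → ℝ) → ℝ)
    (Xsol : Set (Fin n → ℝ)) (hXsolsub : Xsol ⊆ X) (hXsolne : Xsol.Nonempty)
    (hrc : ∀ x ∈ Xsol, f x ∈ Set.range (F x)) :
    ∀ A : Set (Fin n → ℝ), A ⊆ Xsol →
      (∀ x ∈ X, ∃ V ∈ nhds x, (V ∩ A).Subsingleton) →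
      ∃ U : (Fin n → ℝ) → ℝ, ContDiffOn ℝ (⊤ : ℕ∞) U X ∧
        ∀ x ∈ A, TOp e F U x = f x := by
  classical
  intro A hAXsol hAdisc
  -- choose the target derivative data
  have hξex : ∀ a : Fin n → ℝ, ∃ ξv : Fin M → ℝ, a ∈ A → F a ξv = f a := by
    intro a
    by_cases ha : a ∈ A
    · obtain ⟨ξv, hξv⟩ := hrc a (hAXsol ha)
      exact ⟨ξv, fun _ => hξv⟩
    · exact ⟨0, fun h => absurd h ha⟩
  choose ξ hξ using hξex
  -- choose radii
  have hrex : ∀ a : Fin n → ℝ, ∃ r : ℝ, 0 < r ∧ (a ∈ A →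
      (Metric.ball a (4*r) ⊆ X ∧ ∀ y ∈ Metric.ball a (4*r), y ∈ A → y = a)) := by
    intro a
    by_cases ha : a ∈ A
    · have haX : a ∈ X := hXsolsub (hAXsol ha)
      obtain ⟨V, hV, hVs⟩ := hAdisc a haX
      have hVX : V ∩ X ∈ 𝓝 a := Filter.inter_mem hV (hXopen.mem_nhds haX)
      obtain ⟨ε, hε, hb⟩ := Metric.mem_nhds_iff.mp hVX
      refine ⟨ε/4, by linarith, fun _ => ⟨?_, ?_⟩⟩
      · intro y hy
        have : y ∈ Metric.ball a ε := by
          have h4 : 4 * (ε/4) = ε := by ring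
          rwa [h4] at hy
        exact (hb this).2
      · intro y hy hyA
        have hyb : y ∈ Metric.ball a ε := by
          have h4 : 4 * (ε/4) = ε := by ring
          rwa [h4] at hy
        have hyV : y ∈ V := (hb hyb).1
        have haV : a ∈ V := mem_of_mem_nhds hV
        exact hVs ⟨hyV, hyA⟩ ⟨haV, ha⟩
    · exact ⟨1, one_pos, fun h => absurd h ha⟩
  choose r hr0 hrprop using hrex
  have hrX : ∀ a ∈ A, Metric.ball a (4 * r a) ⊆ X := fun a ha => (hrprop a ha).1
  have hrA : ∀ a ∈ A, ∀ y ∈ Metric.ball a (4 * r a), y ∈ A → y = a := fun a ha => (hrprop a ha).2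
  -- disjointness of double balls
  have hdisj : ∀ a ∈ A, ∀ b ∈ A, ∀ y : Fin n → ℝ,
      y ∈ Metric.ball a (2 * r a) → y ∈ Metric.ball b (2 * r b) → a = b := by
    intro a ha b hb y hya hyb
    rw [Metric.mem_ball] at hya hyb
    rcases le_total (r a) (r b) with h | h
    · refine hrA b hb a ?_ ha
      rw [Metric.mem_ball]
      calc dist a b ≤ dist a y + dist y b := dist_triangle a y b
        _ = dist y a + dist y b := by rw [dist_comm]
        _ < 2 * r a + 2 * r b := by linarith
        _ ≤ 4 * r b := by linarith
    · refine (hrA a ha b ?_ hb).symm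
      rw [Metric.mem_ball]
      calc dist b a ≤ dist b y + dist y a := dist_triangle b y a
        _ = dist y b + dist y a := by rw [dist_comm]
        _ < 2 * r b + 2 * r a := by linarith
        _ ≤ 4 * r a := by linarith
  -- bump functions
  let B : (a : Fin n → ℝ) → ContDiffBump a := fun a =>
    ⟨r a / 2, 3 * r a / 4, by linarith [hr0 a], by linarith [hr0 a]⟩
  let g : (Fin n → ℝ) → (Fin n → ℝ) → ℝ := fun a x =>
    if a ∈ A then (B a) x * PolyA a (ξ a) e x else 0
  let U : (Fin n → ℝ) → ℝ := fun x => ∑ᶠ a, g a x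
  -- support bound for g
  have hsupp : ∀ x a, g a x ≠ 0 → a ∈ A ∧ x ∈ Metric.ball a (r a) := by
    intro x a hga
    by_cases ha : a ∈ A
    · refine ⟨ha, ?_⟩
      have hB : (B a) x ≠ 0 := by
        intro h0
        exact hga (by simp only [g, if_pos ha, h0, zero_mul])
      have hx : x ∈ Function.support (B a) := hB
      rw [(B a).support_eq] at hx
      have : (3 : ℝ) * r a / 4 ≤ r a := by linarith [hr0 a]
      exact Metric.ball_subset_ball this hx
    · exact absurd (by simp only [g, if_neg ha]) hga
  -- local finiteness
  have hlocfin : ∀ x ∈ X, ∃ ρ : ℝ, 0 < ρ ∧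
      {a : Fin n → ℝ | a ∈ A ∧ (Metric.ball x ρ ∩ Metric.ball a (r a)).Nonempty}.Finite := by
    intro x hx
    obtain ⟨V, hV, hVs⟩ := hAdisc x hx
    obtain ⟨ε, hε, hb⟩ := Metric.mem_nhds_iff.mp hV
    refine ⟨ε/4, by linarith, ?_⟩
    have hsub : {a : Fin n → ℝ | a ∈ A ∧ (Metric.ball x (ε/4) ∩ Metric.ball a (r a)).Nonempty}
        ⊆ {a | a ∈ A ∧ x ∈ Metric.ball a (2 * r a)} ∪ (V ∩ A) := by
      rintro a ⟨ha, y, hyx, hya⟩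
      rw [Metric.mem_ball] at hyx hya
      have hxa : dist x a < ε/4 + r a := by
        calc dist x a ≤ dist x y + dist y a := dist_triangle x y a
          _ = dist y x + dist y a := by rw [dist_comm]
          _ < ε/4 + r a := by linarith
      rcases le_total (ε/4) (r a) with h | h
      · left
        exact ⟨ha, by rw [Metric.mem_ball]; linarith⟩
      · right
        refine ⟨hb ?_, ha⟩
        rw [Metric.mem_ball, dist_comm]
        linarith
    refine Set.Finite.subset (Set.Finite.union ?_ ?_) hsub
    · apply Set.Subsingleton.finite
      rintro a ⟨ha, hxa⟩ b ⟨hb, hxb⟩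
      exact hdisj a ha b hb x hxa hxb
    · exact Set.Subsingleton.finite hVs
  refine ⟨U, ?_, ?_⟩
  · -- smoothness
    apply contDiffOn_of_locally_contDiffOn
    intro x hx
    obtain ⟨ρ, hρ, hSfin⟩ := hlocfin x hx
    refine ⟨Metric.ball x ρ, Metric.isOpen_ball, Metric.mem_ball_self hρ, ?_⟩
    have hUeq : ∀ y ∈ Metric.ball x ρ, U y = ∑ a ∈ hSfin.toFinset, g a y := by
      intro y hy
      apply finsum_eq_sum_of_support_subset
      intro a ha
      obtain ⟨haA, hy2⟩ := hsupp y a ha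
      rw [Set.Finite.coe_toFinset]
      exact ⟨haA, y, hy, hy2⟩
    have hsm : ContDiff ℝ (⊤ : ℕ∞) (fun y => ∑ a ∈ hSfin.toFinset, g a y) := by
      apply ContDiff.sum
      intro a _
      by_cases ha : a ∈ A
      · simp only [g, if_pos ha]
        exact ((B a).contDiff).mul (contDiff_PolyA a (ξ a) e)
      · simp only [g, if_neg ha]
        exact contDiff_const
    exact (hsm.contDiffOn).congr fun y hy => hUeq y hy.2
  · -- the PDE is solved on A
    intro a ha
    have hUP : Set.EqOn U (PolyA a (ξ a) e) (Metric.ball a (r a / 2)) := by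
      intro y hy
      have hsub2 : (Function.support fun b => g b y) ⊆ (({a} : Finset (Fin n → ℝ)) : Set (Fin n → ℝ)) := by
        intro b hbsup
        have ⟨hbA, hyb⟩ := hsupp y b hbsup
        have hyb2 : y ∈ Metric.ball b (2 * r b) :=
          Metric.ball_subset_ball (by linarith [hr0 b]) hyb
        have hya2 : y ∈ Metric.ball a (2 * r a) :=
          Metric.ball_subset_ball (by linarith [hr0 a]) hy
        have : b = a := hdisj b hbA a ha y hyb2 hya2
        simp [this]
      have : U y = ∑ b ∈ ({a} : Finset (Fin n → ℝ)), g b y :=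
        finsum_eq_sum_of_support_subset _ hsub2
      rw [this, Finset.sum_singleton]
      have hBy : (B a) y = 1 := by
        apply (B a).one_of_mem_closedBall
        exact Metric.ball_subset_closedBall hy
      simp only [g, if_pos ha, hBy, one_mul]
    have key : ∀ i0 : Fin M, mderiv (e i0) U a = ξ a i0 := by
      intro i0
      have h1 := mderiv_congr (e i0) Metric.isOpen_ball hUP
        (Metric.mem_ball_self (by linarith [hr0 a]))
      rw [h1, mderiv_PolyA a (ξ a) e he i0]
    show F a (fun i => mderiv (e i) U a) = f a
    have : (fun i => mderiv (e i) U a) = ξ a := funext fun i => key i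
    rw [this]
    exact hξ a ha
end

section
/- Let X ⊆ ℝ^n be a nonempty open set, let Σ ⊆ X be any subset, let M ∈ ℕ, and let F : X × ℝ^M → ℝ be jointly smooth. For i = 1, …, M let (s_{i,ν})_{ν ∈ ℕ} and (s′_{i,ν})_{ν ∈ ℕ} be sequences of smooth functions X → ℝ such that each difference sequence (s_{i,ν} − s′_{i,ν})_{ν ∈ ℕ} belongs to J_Σ(X). Then the sequence of smooth functions t_ν(x) = F(x, s_{1,ν}(x), …, s_{M,ν}(x)) − F(x, s′_{1,ν}(x), …, s′_{M,ν}(x)) belongs to J_Σ(X). (Hence the nonlinear map F acts well-definedly on the quotient algebra B_Σ(X) = (C^∞(X))^ℕ / J_Σ(X).) -/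
open Set Topology Filter

/-- Membership in the ideal `J_Σ(X)`: a sequence of smooth functions on `X` whose
derivatives asymptotically vanish (in the finite-type sense) at every point of `X \ Σ`. -/
def memJ {n : ℕ} (X Sg : Set (Fin n → ℝ)) (w : ℕ → (Fin n → ℝ) → ℝ) : Prop :=
  (∀ ν : ℕ, ContDiffOn ℝ (⊤ : ℕ∞) (w ν) X) ∧
  ∀ x ∈ X \ Sg, ∀ l : ℕ, ∃ ν : ℕ, ∀ μ ≥ ν, ∀ p : Fin n → ℕ,
    (∑ i, p i) ≤ l → mderiv p (w μ) x = 0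

noncomputable def lderiv {n : ℕ} (L : List (Fin n)) (f : (Fin n → ℝ) → ℝ) : (Fin n → ℝ) → ℝ :=
  L.foldr pder f

lemma lderiv_nil {n : ℕ} (f : (Fin n → ℝ) → ℝ) : lderiv [] f = f := rfl
lemma lderiv_cons {n : ℕ} (i : Fin n) (L : List (Fin n)) (f : (Fin n → ℝ) → ℝ) :
    lderiv (i :: L) f = pder i (lderiv L f) := rfl
lemma lderiv_append {n : ℕ} (L₁ L₂ : List (Fin n)) (f : (Fin n → ℝ) → ℝ) :
    lderiv (L₁ ++ L₂) f = lderiv L₁ (lderiv L₂ f) := List.foldr_append ..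

lemma pder_congrOn {n : ℕ} {U : Set (Fin n → ℝ)} (hU : IsOpen U) {f g : (Fin n → ℝ) → ℝ}
    (h : Set.EqOn f g U) (i : Fin n) : Set.EqOn (pder i f) (pder i g) U := by
  intro x hx
  unfold pder
  rw [Filter.EventuallyEq.fderiv_eq (Filter.eventuallyEq_of_mem (hU.mem_nhds hx) h)]

lemma lderiv_congrOn {n : ℕ} {U : Set (Fin n → ℝ)} (hU : IsOpen U) {f g : (Fin n → ℝ) → ℝ}
    (h : Set.EqOn f g U) (L : List (Fin n)) : Set.EqOn (lderiv L f) (lderiv L g) U := by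
  induction L with
  | nil => exact h
  | cons i L ih => exact pder_congrOn hU ih i

lemma pder_contDiffOn {n : ℕ} {U : Set (Fin n → ℝ)} (hU : IsOpen U) {f : (Fin n → ℝ) → ℝ}
    (hf : ContDiffOn ℝ (⊤ : ℕ∞) f U) (i : Fin n) : ContDiffOn ℝ (⊤ : ℕ∞) (pder i f) U := by
  exact (hf.fderiv_of_isOpen hU (by exact_mod_cast le_top)).clm_apply contDiffOn_const

lemma lderiv_contDiffOn {n : ℕ} {U : Set (Fin n → ℝ)} (hU : IsOpen U) {f : (Fin n → ℝ) → ℝ}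
    (hf : ContDiffOn ℝ (⊤ : ℕ∞) f U) (L : List (Fin n)) : ContDiffOn ℝ (⊤ : ℕ∞) (lderiv L f) U := by
  induction L with
  | nil => exact hf
  | cons i L ih => exact pder_contDiffOn hU ih i

lemma pder_comm {n : ℕ} {U : Set (Fin n → ℝ)} (hU : IsOpen U) {f : (Fin n → ℝ) → ℝ}
    (hf : ContDiffOn ℝ (⊤ : ℕ∞) f U) (i k : Fin n) :
    Set.EqOn (pder i (pder k f)) (pder k (pder i f)) U := by
  intro x hx
  have hfx : ContDiffAt ℝ (⊤ : ℕ∞) f x := hf.contDiffAt (hU.mem_nhds hx)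
  have hdf : DifferentiableAt ℝ (fderiv ℝ f) x :=
    (hfx.fderiv_right (m := (1 : ℕ∞)) (by exact_mod_cast le_top)).differentiableAt
      (by simp)
  have key : ∀ a b : Fin n, pder a (pder b f) x
      = fderiv ℝ (fderiv ℝ f) x (Pi.single a 1) (Pi.single b 1) := by
    intro a b
    have : pder a (pder b f) x
        = fderiv ℝ (fun z => (fderiv ℝ f z) ((fun _ => (Pi.single b 1 : Fin n → ℝ)) z)) x
            (Pi.single a 1) := rfl
    rw [this, fderiv_clm_apply hdf (differentiableAt_const _)]
    simp
  rw [key i k, key k i]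
  exact (hfx.isSymmSndFDerivAt (by rw [minSmoothness_of_isRCLikeNormedField]; exact WithTop.coe_le_coe.2 (le_top : (2 : ℕ∞) ≤ ⊤))) _ _

/-- list of a multi-index -/
def mlist {n : ℕ} (p : Fin n → ℕ) : List (Fin n) :=
  (List.finRange n).flatMap fun i => List.replicate (p i) i

lemma lderiv_replicate {n : ℕ} (k : ℕ) (i : Fin n) (f : (Fin n → ℝ) → ℝ) :
    lderiv (List.replicate k i) f = (pder i)^[k] f := by
  induction k with
  | zero => rfl
  | succ k ih => rw [List.replicate_succ, Function.iterate_succ_apply']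
                 show pder i (lderiv (List.replicate k i) f) = _
                 rw [ih]

lemma mderiv_eq_lderiv {n : ℕ} (p : Fin n → ℕ) (f : (Fin n → ℝ) → ℝ) :
    mderiv p f = lderiv (mlist p) f := by
  show _ = lderiv ((List.finRange n).flatMap fun i => List.replicate (p i) i) f
  unfold mderiv
  induction List.finRange n with
  | nil => rfl
  | cons i K ih =>
      rw [List.foldr_cons, List.flatMap_cons, lderiv_append, ← ih, lderiv_replicate]

lemma length_mlist {n : ℕ} (p : Fin n → ℕ) : (mlist p).length = ∑ i, p i := by
  unfold mlist
  rw [List.length_flatMap, Fin.sum_univ_def]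
  induction List.finRange n with
  | nil => rfl
  | cons a K ih => simp [ih]

lemma count_mlist {n : ℕ} (p : Fin n → ℕ) (j : Fin n) : (mlist p).count j = p j := by
  unfold mlist
  have h : ∀ K : List (Fin n), K.Nodup → j ∈ K →
      (K.flatMap fun i => List.replicate (p i) i).count j = p j := by
    intro K
    induction K with
    | nil => intro _ h; simp at h
    | cons i K ih =>
        intro hnd hmem
        rw [List.flatMap_cons, List.count_append, List.count_replicate]
        rcases List.mem_cons.1 hmem with rfl | hm
        · have hj : j ∉ K := (List.nodup_cons.1 hnd).1
          have h0 : (K.flatMap fun i => List.replicate (p i) i).count j = 0 := by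
            rw [List.count_eq_zero]
            intro hc
            rcases List.mem_flatMap.1 hc with ⟨a, ha, hb⟩
            rcases List.eq_of_mem_replicate hb with rfl
            exact hj ha
          rw [h0]
          simp
        · have hne : j ≠ i := fun h => ((List.nodup_cons.1 hnd).1 (h ▸ hm))
          rw [ih (List.nodup_cons.1 hnd).2 hm]
          simp [hne, Ne.symm hne]
  exact h _ (List.nodup_finRange n) (List.mem_finRange j)

lemma mlist_perm {n : ℕ} (L : List (Fin n)) : List.Perm (mlist (fun i => L.count i)) L := by
  rw [List.perm_iff_count]
  intro j
  rw [count_mlist]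

lemma lderiv_perm {n : ℕ} {U : Set (Fin n → ℝ)} (hU : IsOpen U) {f : (Fin n → ℝ) → ℝ}
    (hf : ContDiffOn ℝ (⊤ : ℕ∞) f U) {L L' : List (Fin n)} (h : List.Perm L L') :
    Set.EqOn (lderiv L f) (lderiv L' f) U := by
  induction h with
  | nil => exact fun x _ => rfl
  | cons a _ ih => exact pder_congrOn hU ih a
  | swap a b L => exact pder_comm hU (lderiv_contDiffOn hU hf L) b a
  | trans _ _ ih1 ih2 => exact fun x hx => (ih1 hx).trans (ih2 hx)

lemma lderiv_of_mderiv {n : ℕ} {U : Set (Fin n → ℝ)} (hU : IsOpen U) {w : (Fin n → ℝ) → ℝ}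
    (hw : ContDiffOn ℝ (⊤ : ℕ∞) w U) {x : Fin n → ℝ} (hx : x ∈ U) {l : ℕ}
    (H : ∀ p : Fin n → ℕ, (∑ i, p i) ≤ l → mderiv p w x = 0) :
    ∀ L : List (Fin n), L.length ≤ l → lderiv L w x = 0 := by
  intro L hL
  have hperm := mlist_perm L
  have heq : lderiv L w x = lderiv (mlist (fun i => L.count i)) w x :=
    (lderiv_perm hU hw hperm hx).symm
  rw [heq, ← mderiv_eq_lderiv]
  apply H
  have h1 := length_mlist (fun i => L.count i)
  have h2 : (mlist fun i => L.count i).length = L.length := hperm.length_eq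
  omega

lemma comp_smooth {n M : ℕ} {X : Set (Fin n → ℝ)}
    {F : (Fin n → ℝ) → (Fin M → ℝ) → ℝ}
    (hF : ContDiffOn ℝ (⊤ : ℕ∞) (fun q : (Fin n → ℝ) × (Fin M → ℝ) => F q.1 q.2) (X ×ˢ Set.univ))
    {g : Fin M → (Fin n → ℝ) → ℝ} (hg : ∀ i, ContDiffOn ℝ (⊤ : ℕ∞) (g i) X) :
    ContDiffOn ℝ (⊤ : ℕ∞) (fun y => F y (fun i => g i y)) X := by
  have h1 : ContDiffOn ℝ (⊤ : ℕ∞) (fun y => ((y, fun i => g i y) : (Fin n → ℝ) × (Fin M → ℝ))) X :=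
    contDiffOn_id.prodMk (contDiffOn_pi.2 hg)
  exact hF.comp h1 (fun y hy => ⟨hy, mem_univ _⟩)

lemma pder_comp {n M : ℕ} {X : Set (Fin n → ℝ)} (hX : IsOpen X)
    {F : (Fin n → ℝ) → (Fin M → ℝ) → ℝ}
    (hF : ContDiffOn ℝ (⊤ : ℕ∞) (fun q : (Fin n → ℝ) × (Fin M → ℝ) => F q.1 q.2) (X ×ˢ Set.univ))
    {g : Fin M → (Fin n → ℝ) → ℝ} (hg : ∀ i, ContDiffOn ℝ (⊤ : ℕ∞) (g i) X)
    (j : Fin n) {y : Fin n → ℝ} (hy : y ∈ X) :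
    pder j (fun z => F z (fun i => g i z)) y
      = fderiv ℝ (fun q : (Fin n → ℝ) × (Fin M → ℝ) => F q.1 q.2) (y, fun i => g i y)
          (Pi.single j 1, fun i => pder j (g i) y) := by
  set Fu := fun q : (Fin n → ℝ) × (Fin M → ℝ) => F q.1 q.2 with hFu
  have hgd : ∀ i, DifferentiableAt ℝ (g i) y := fun i =>
    ((hg i).contDiffAt (hX.mem_nhds hy)).differentiableAt (by simp)
  have hGd : HasFDerivAt (fun z (i : Fin M) => g i z)
      (ContinuousLinearMap.pi fun i => fderiv ℝ (g i) y) y :=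
    hasFDerivAt_pi.2 fun i => (hgd i).hasFDerivAt
  have hP : HasFDerivAt (fun z => ((z, fun i => g i z) : (Fin n → ℝ) × (Fin M → ℝ)))
      ((ContinuousLinearMap.id ℝ (Fin n → ℝ)).prod
        (ContinuousLinearMap.pi fun i => fderiv ℝ (g i) y)) y :=
    (hasFDerivAt_id y).prodMk hGd
  have hFd : DifferentiableAt ℝ Fu (y, fun i => g i y) :=
    (hF.contDiffAt (((hX.prod isOpen_univ)).mem_nhds ⟨hy, mem_univ _⟩)).differentiableAt
      (by simp)
  have hcomp := (hFd.hasFDerivAt.comp y hP).fderiv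
  show fderiv ℝ (fun z => Fu (z, fun i => g i z)) y (Pi.single j 1) = _
  rw [show (fun z => Fu (z, fun i => g i z))
      = Fu ∘ (fun z => ((z, fun i => g i z) : (Fin n → ℝ) × (Fin M → ℝ))) from rfl, hcomp]
  simp [pder]

lemma pder_sub {n : ℕ} {U : Set (Fin n → ℝ)} (hU : IsOpen U) {f g : (Fin n → ℝ) → ℝ}
    (hf : ContDiffOn ℝ (⊤ : ℕ∞) f U) (hg : ContDiffOn ℝ (⊤ : ℕ∞) g U) (j : Fin n) :
    Set.EqOn (pder j (fun y => f y - g y)) (fun y => pder j f y - pder j g y) U := by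
  intro y hy
  have hfd : DifferentiableAt ℝ f y :=
    (hf.contDiffAt (hU.mem_nhds hy)).differentiableAt (by simp)
  have hgd : DifferentiableAt ℝ g y :=
    (hg.contDiffAt (hU.mem_nhds hy)).differentiableAt (by simp)
  show fderiv ℝ (fun y => f y - g y) y (Pi.single j 1) = _
  rw [fderiv_fun_sub hfd hgd]
  rfl

lemma Ft_smooth {n M : ℕ} {X : Set (Fin n → ℝ)} (hX : IsOpen X)
    {F : (Fin n → ℝ) → (Fin M → ℝ) → ℝ}
    (hF : ContDiffOn ℝ (⊤ : ℕ∞) (fun q : (Fin n → ℝ) × (Fin M → ℝ) => F q.1 q.2) (X ×ˢ Set.univ))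
    (j : Fin n) :
    ContDiffOn ℝ (⊤ : ℕ∞)
      (fun q : (Fin n → ℝ) × (Fin (M + M) → ℝ) =>
        fderiv ℝ (fun q : (Fin n → ℝ) × (Fin M → ℝ) => F q.1 q.2)
          (q.1, fun i => q.2 (Fin.castAdd M i))
          ((Pi.single j 1 : Fin n → ℝ), fun i => q.2 (Fin.natAdd M i)))
      (X ×ˢ Set.univ) := by
  set Fu := fun q : (Fin n → ℝ) × (Fin M → ℝ) => F q.1 q.2 with hFu
  have hop : IsOpen (X ×ˢ (Set.univ : Set (Fin M → ℝ))) := hX.prod isOpen_univ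
  have hΦ : ContDiffOn ℝ (⊤ : ℕ∞) (fderiv ℝ Fu) (X ×ˢ Set.univ) :=
    hF.fderiv_of_isOpen hop (by norm_cast)
  have hA1 : ContDiff ℝ (⊤ : ℕ∞) (fun q : (Fin n → ℝ) × (Fin (M + M) → ℝ) =>
      ((q.1, fun i => q.2 (Fin.castAdd M i)) : (Fin n → ℝ) × (Fin M → ℝ))) :=
    contDiff_fst.prodMk (contDiff_pi.2 fun i =>
      ((ContinuousLinearMap.proj (R := ℝ) (φ := fun _ : Fin (M + M) => ℝ)
        (Fin.castAdd M i)).contDiff).comp contDiff_snd)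
  have hA2 : ContDiff ℝ (⊤ : ℕ∞) (fun q : (Fin n → ℝ) × (Fin (M + M) → ℝ) =>
      (((Pi.single j 1 : Fin n → ℝ), fun i => q.2 (Fin.natAdd M i))
        : (Fin n → ℝ) × (Fin M → ℝ))) :=
    contDiff_const.prodMk (contDiff_pi.2 fun i =>
      ((ContinuousLinearMap.proj (R := ℝ) (φ := fun _ : Fin (M + M) => ℝ)
        (Fin.natAdd M i)).contDiff).comp contDiff_snd)
  have hmaps : Set.MapsTo (fun q : (Fin n → ℝ) × (Fin (M + M) → ℝ) =>
      ((q.1, fun i => q.2 (Fin.castAdd M i)) : (Fin n → ℝ) × (Fin M → ℝ)))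
      (X ×ˢ Set.univ) (X ×ˢ Set.univ) := fun q hq => ⟨hq.1, mem_univ _⟩
  exact (hΦ.comp hA1.contDiffOn hmaps).clm_apply hA2.contDiffOn

lemma key {n : ℕ} {X : Set (Fin n → ℝ)} (hXopen : IsOpen X) (l : ℕ) :
    ∀ (M : ℕ) (F : (Fin n → ℝ) → (Fin M → ℝ) → ℝ),
      ContDiffOn ℝ (⊤ : ℕ∞) (fun q : (Fin n → ℝ) × (Fin M → ℝ) => F q.1 q.2) (X ×ˢ Set.univ) →
      ∀ g h : Fin M → (Fin n → ℝ) → ℝ,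
        (∀ i, ContDiffOn ℝ (⊤ : ℕ∞) (g i) X) →
        (∀ i, ContDiffOn ℝ (⊤ : ℕ∞) (h i) X) →
        ∀ x, x ∈ X →
        (∀ (i : Fin M) (L : List (Fin n)), L.length ≤ l →
            lderiv L (fun y => g i y - h i y) x = 0) →
        ∀ L : List (Fin n), L.length ≤ l →
          lderiv L (fun y => F y (fun i => g i y) - F y (fun i => h i y)) x = 0 := by
  induction l with
  | zero =>
    intro M F hF g h hg hh x hx H L hL
    have hnil : L = [] := List.length_eq_zero_iff.1 (Nat.le_zero.1 hL)
    subst hnil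
    have hgh : (fun i => g i x) = fun i => h i x := by
      funext i
      have h0 := H i [] (le_refl 0)
      have : g i x - h i x = 0 := h0
      linarith
    show F x (fun i => g i x) - F x (fun i => h i x) = 0
    rw [hgh, sub_self]
  | succ l ih =>
    intro M F hF g h hg hh x hx H L hL
    rcases List.eq_nil_or_concat L with rfl | ⟨L', j, rfl⟩
    · have hgh : (fun i => g i x) = fun i => h i x := by
        funext i
        have h0 := H i [] (Nat.zero_le _)
        have : g i x - h i x = 0 := h0
        linarith
      show F x (fun i => g i x) - F x (fun i => h i x) = 0
      rw [hgh, sub_self]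
    · rw [List.concat_eq_append] at hL ⊢
      have hL' : L'.length ≤ l := by simpa using Nat.succ_le_succ_iff.1 (by simpa using hL)
      set Fu := fun q : (Fin n → ℝ) × (Fin M → ℝ) => F q.1 q.2 with hFudef
      set Ft : (Fin n → ℝ) → (Fin (M + M) → ℝ) → ℝ := fun y v =>
        fderiv ℝ Fu (y, fun i => v (Fin.castAdd M i))
          ((Pi.single j 1 : Fin n → ℝ), fun i => v (Fin.natAdd M i)) with hFtdef
      set gt : Fin (M + M) → (Fin n → ℝ) → ℝ := Fin.append g (fun i => pder j (g i)) with hgtdef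
      set ht : Fin (M + M) → (Fin n → ℝ) → ℝ := Fin.append h (fun i => pder j (h i)) with hhtdef
      -- smoothness of new data
      have hFt : ContDiffOn ℝ (⊤ : ℕ∞)
          (fun q : (Fin n → ℝ) × (Fin (M + M) → ℝ) => Ft q.1 q.2) (X ×ˢ Set.univ) :=
        Ft_smooth hXopen hF j
      have hgt : ∀ i, ContDiffOn ℝ (⊤ : ℕ∞) (gt i) X := by
        intro i
        refine Fin.addCases (fun i0 => ?_) (fun i0 => ?_) i
        · rw [hgtdef]; rw [Fin.append_left]; exact hg i0
        · rw [hgtdef]; rw [Fin.append_right]; exact pder_contDiffOn hXopen (hg i0) j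
      have hht : ∀ i, ContDiffOn ℝ (⊤ : ℕ∞) (ht i) X := by
        intro i
        refine Fin.addCases (fun i0 => ?_) (fun i0 => ?_) i
        · rw [hhtdef]; rw [Fin.append_left]; exact hh i0
        · rw [hhtdef]; rw [Fin.append_right]; exact pder_contDiffOn hXopen (hh i0) j
      -- step A : identification of pder j Φ on X
      have hA : Set.EqOn (pder j (fun y => F y (fun i => g i y) - F y (fun i => h i y)))
          (fun y => Ft y (fun i => gt i y) - Ft y (fun i => ht i y)) X := by
        intro y hy
        have h1 := pder_sub hXopen (comp_smooth hF hg) (comp_smooth hF hh) j hy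
        rw [h1]
        have h2 := pder_comp hXopen hF hg j hy
        have h3 := pder_comp hXopen hF hh j hy
        show pder j (fun z => F z (fun i => g i z)) y
            - pder j (fun z => F z (fun i => h i z)) y = _
        rw [h2, h3]
        have e1 : (fun i => (fun i' => gt i' y) (Fin.castAdd M i)) = fun i => g i y := by
          funext i; simp [hgtdef, Fin.append_left]
        have e2 : (fun i => (fun i' => gt i' y) (Fin.natAdd M i)) = fun i => pder j (g i) y := by
          funext i
          show Fin.append g (fun i => pder j (g i)) (Fin.natAdd M i) y = _
          rw [Fin.append_right]
        have e3 : (fun i => (fun i' => ht i' y) (Fin.castAdd M i)) = fun i => h i y := by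
          funext i; simp [hhtdef, Fin.append_left]
        have e4 : (fun i => (fun i' => ht i' y) (Fin.natAdd M i)) = fun i => pder j (h i) y := by
          funext i
          show Fin.append h (fun i => pder j (h i)) (Fin.natAdd M i) y = _
          rw [Fin.append_right]
        rw [hFtdef]
        simp only [e1, e2, e3, e4]
        rfl
      -- step D : hypothesis for the new system
      have HD : ∀ (i : Fin (M + M)) (L'' : List (Fin n)), L''.length ≤ l →
          lderiv L'' (fun y => gt i y - ht i y) x = 0 := by
        intro i L'' hlen
        refine Fin.addCases (fun i0 => ?_) (fun i0 => ?_) i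
        · have e : (fun y => gt (Fin.castAdd M i0) y - ht (Fin.castAdd M i0) y)
              = fun y => g i0 y - h i0 y := by
            funext y; rw [hgtdef, hhtdef, Fin.append_left, Fin.append_left]
          rw [e]
          exact H i0 L'' (le_trans hlen (Nat.le_succ l))
        · have e : (fun y => gt (Fin.natAdd M i0) y - ht (Fin.natAdd M i0) y)
              = fun y => pder j (g i0) y - pder j (h i0) y := by
            funext y; rw [hgtdef, hhtdef, Fin.append_right, Fin.append_right]
          rw [e]
          have heq : Set.EqOn (fun y => pder j (g i0) y - pder j (h i0) y)
              (pder j (fun y => g i0 y - h i0 y)) X :=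
            fun y hy => (pder_sub hXopen (hg i0) (hh i0) j hy).symm
          rw [lderiv_congrOn hXopen heq L'' hx]
          rw [show (pder j (fun y => g i0 y - h i0 y))
              = lderiv [j] (fun y => g i0 y - h i0 y) from rfl, ← lderiv_append]
          exact H i0 (L'' ++ [j]) (by simpa using Nat.succ_le_succ hlen)
      -- conclude
      rw [lderiv_append]
      have : lderiv L' (lderiv [j] (fun y => F y (fun i => g i y) - F y (fun i => h i y))) x
          = lderiv L' (fun y => Ft y (fun i => gt i y) - Ft y (fun i => ht i y)) x :=
        lderiv_congrOn hXopen hA L' hx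
      rw [show lderiv [j] (fun y => F y (fun i => g i y) - F y (fun i => h i y))
          = pder j (fun y => F y (fun i => g i y) - F y (fun i => h i y)) from rfl] at this ⊢
      rw [this]
      exact ih (M + M) Ft hFt gt ht hgt hht x hx HD L' hL'

/-- **Well-definedness of the nonlinear action (3.18).** Let `X ⊆ ℝⁿ` be a nonempty open
set, `Σ ⊆ X`, and `F : X × ℝᴹ → ℝ` jointly smooth. If, for `i = 1, …, M`, the sequences
`(s_{i,ν})` and `(s′_{i,ν})` of smooth functions on `X` have termwise differences in
`J_Σ(X)`, then the sequence `t_ν(x) = F(x, s_{1,ν}(x), …, s_{M,ν}(x)) −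
F(x, s′_{1,ν}(x), …, s′_{M,ν}(x))` belongs to `J_Σ(X)`; hence `F` acts well-definedly on
the quotient algebra `B_Σ(X) = (C^∞(X))^ℕ / J_Σ(X)`. -/
theorem nonlinear_action_well_defined
    {n M : ℕ} (X : Set (Fin n → ℝ)) (hXopen : IsOpen X) (hXne : X.Nonempty)
    (Sg : Set (Fin n → ℝ)) (hSg : Sg ⊆ X)
    (F : (Fin n → ℝ) → (Fin M → ℝ) → ℝ)
    (hF : ContDiffOn ℝ (⊤ : ℕ∞) (fun q : (Fin n → ℝ) × (Fin M → ℝ) => F q.1 q.2)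
      (X ×ˢ Set.univ))
    (s s' : Fin M → ℕ → (Fin n → ℝ) → ℝ)
    (hs : ∀ (i : Fin M) (ν : ℕ), ContDiffOn ℝ (⊤ : ℕ∞) (s i ν) X)
    (hs' : ∀ (i : Fin M) (ν : ℕ), ContDiffOn ℝ (⊤ : ℕ∞) (s' i ν) X)
    (hdiff : ∀ i : Fin M, memJ X Sg (fun ν => fun x => s i ν x - s' i ν x)) :
    memJ X Sg (fun ν => fun x =>
      F x (fun i => s i ν x) - F x (fun i => s' i ν x)) := by
  constructor
  · intro ν
    exact (comp_smooth hF (fun i => hs i ν)).sub (comp_smooth hF (fun i => hs' i ν))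
  · intro x hx l
    have hxX : x ∈ X := hx.1
    choose ν hν using fun i : Fin M => (hdiff i).2 x hx l
    refine ⟨Finset.univ.sup ν, fun μ hμ p hp => ?_⟩
    rw [mderiv_eq_lderiv]
    have hlen : (mlist p).length ≤ l := by rw [length_mlist]; exact hp
    refine key hXopen l M F hF (fun i => s i μ) (fun i => s' i μ)
      (fun i => hs i μ) (fun i => hs' i μ) x hxX ?_ (mlist p) hlen
    intro i L hL
    exact lderiv_of_mderiv hXopen ((hs i μ).sub (hs' i μ)) hxX
      (fun q hq => hν i μ (le_trans (Finset.le_sup (Finset.mem_univ i)) hμ) q hq) L hL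
end
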